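/- arXiv:2411.05241 — 3 statements merged into one kernel-verified Lean document; each statement's English description precedes it below -/
import Mathlib

section
/- Let T be an ω₁-tree that is not special, let C ⊆ ω₁ be a club, and let G be a T-graph with cofinal ω-sequences C(T,v) assigned to each node v at a limit level. Then there exist α ∈ C, a node v ∈ T^α, and countably many nodes u_n > v (n ∈ ω) such that the set ⋃_{n∈ω} C(T,u_n) ∩ {t : t < v} is infinite. -/
noncomputable def omega1 : Ordinal := (Cardinal.aleph 1).ord

/-- An order tree: a partial order with a least element (root), whose strict
down-sets are chains and whose strict order is well-founded (hence every
down-set is well-ordered). -/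
def IsOrderTree (T : Type*) [PartialOrder T] : Prop :=
  (∃ r : T, ∀ t, r ≤ t) ∧ (∀ t : T, IsChain (· ≤ ·) {s | s < t}) ∧ WellFoundedLT T

/-- `ht` is the height (rank) function of the tree: the height of a node is the
supremum of the successors of the heights of the nodes strictly below it; for an
order tree this is the order type of its strict down-set. -/
def IsHeightFun {T : Type*} [PartialOrder T] (ht : T → Ordinal) : Prop :=
  ∀ t, ht t = sSup ((fun s => ht s + 1) '' {s | s < t})

/-- An `ω₁`-tree: height `ω₁` and all levels countable. -/
def IsOmegaOneTree {T : Type*} [PartialOrder T] (ht : T → Ordinal) : Prop :=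
  (∀ t, ht t < omega1) ∧ (∀ o < omega1, ∃ t, ht t = o) ∧
  (∀ o : Ordinal, {t | ht t = o}.Countable)

/-- An Aronszajn tree has no uncountable branch (chain). -/
def NoUncountableBranch (T : Type*) [PartialOrder T] : Prop :=
  ∀ B : Set T, IsChain (· ≤ ·) B → B.Countable

/-- A tree is special if it is a countable union of antichains. -/
def IsSpecialTree (T : Type*) [PartialOrder T] : Prop :=
  ∃ A : ℕ → Set T, (∀ n, IsAntichain (· ≤ ·) (A n)) ∧ (⋃ n, A n) = Set.univ

/-- A successor node: its strict down-set has a maximum. -/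
def IsSuccNode {T : Type*} [PartialOrder T] (t : T) : Prop :=
  ∃ m, m < t ∧ ∀ s, s < t → s ≤ m

def IsClubIn (C : Set Ordinal) : Prop :=
  C ⊆ Set.Iio omega1 ∧
  (∀ a < omega1, ∃ b ∈ C, a ≤ b) ∧
  (∀ β < omega1, 0 < β → sSup (C ∩ Set.Iio β) = β → β ∈ C)

namespace NSLU

attribute [local instance] Classical.propDecidable

variable {T : Type*} [PartialOrder T]

def Vset (ht : T → Ordinal) (C : Set Ordinal) : Set T := {v | ht v ∈ C ∧ 0 < ht v}

def Sset (ht : T → Ordinal) (c : T → ℕ → T) (v : T) : Set T :=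
  {p | (∃ u, v < u ∧ Order.IsSuccLimit (ht u) ∧ p ∈ Set.range (c u)) ∧ p < v}

noncomputable def gam (ht : T → Ordinal) (c : T → ℕ → T) (v : T) : Ordinal :=
  sSup (ht '' Sset ht c v)

def FreeSet (ht : T → Ordinal) (C : Set Ordinal) (c : T → ℕ → T) (v : T) : Set Ordinal :=
  {β | β < ht v ∧ ∀ v', v' ∈ Vset ht C → v' ≤ v → ¬(gam ht c v' < β ∧ β < ht v')}

noncomputable def bfun (ht : T → Ordinal) (C : Set Ordinal) (c : T → ℕ → T) (v : T) : Ordinal :=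
  sSup (FreeSet ht C c v)

def Pset (ht : T → Ordinal) (C : Set Ordinal) (c : T → ℕ → T) (v : T) : Set Ordinal :=
  {α | α ∈ C ∧ 0 < α ∧ α ≤ bfun ht C c v}

noncomputable def pifun (ht : T → Ordinal) (C : Set Ordinal) (c : T → ℕ → T) (v : T) : Ordinal :=
  sSup (Pset ht C c v)

noncomputable def stepfun (ht : T → Ordinal) (C : Set Ordinal) (c : T → ℕ → T) (v : T) : Option T :=
  if h : ∃ y, y ∈ Vset ht C ∧ y < v ∧ ht y = pifun ht C c v ∧ (Pset ht C c v).Nonempty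
  then some h.choose else none

theorem stepfun_some {ht : T → Ordinal} {C : Set Ordinal} {c : T → ℕ → T} {v y : T}
    (h : stepfun ht C c v = some y) :
    y ∈ Vset ht C ∧ y < v ∧ ht y = pifun ht C c v := by
  unfold stepfun at h
  split at h
  · rename_i hex
    obtain ⟨h1, h2, h3, _⟩ := hex.choose_spec
    obtain rfl : hex.choose = y := Option.some_injective _ h
    exact ⟨h1, h2, h3⟩
  · exact absurd h (by simp)

noncomputable def rankfun (ht : T → Ordinal) (C : Set Ordinal) (c : T → ℕ → T) (v : T) : ℕ :=
  Set.ncard {x | x ∈ Vset ht C ∧ x < v ∧ stepfun ht C c x = stepfun ht C c v}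

noncomputable def wordfun (hwf : WellFounded ((· < ·) : T → T → Prop))
    (ht : T → Ordinal) (C : Set Ordinal) (c : T → ℕ → T) : T → List ℕ :=
  hwf.fix (fun v IH =>
    rankfun ht C c v ::
      (if h : ∃ y, stepfun ht C c v = some y then IH h.choose (stepfun_some h.choose_spec).2.1
       else []))

theorem wordfun_eq (hwf : WellFounded ((· < ·) : T → T → Prop))
    (ht : T → Ordinal) (C : Set Ordinal) (c : T → ℕ → T) (v : T) :
    wordfun hwf ht C c v =
      rankfun ht C c v ::
        (if h : ∃ y, stepfun ht C c v = some y then wordfun hwf ht C c h.choose else []) := by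
  rw [wordfun, WellFounded.fix_eq]

theorem wordfun_none (hwf : WellFounded ((· < ·) : T → T → Prop))
    {ht : T → Ordinal} {C : Set Ordinal} {c : T → ℕ → T} {v : T}
    (h : stepfun ht C c v = none) :
    wordfun hwf ht C c v = [rankfun ht C c v] := by
  rw [wordfun_eq, dif_neg]
  simp [h]

theorem wordfun_some (hwf : WellFounded ((· < ·) : T → T → Prop))
    {ht : T → Ordinal} {C : Set Ordinal} {c : T → ℕ → T} {v y : T}
    (h : stepfun ht C c v = some y) :
    wordfun hwf ht C c v = rankfun ht C c v :: wordfun hwf ht C c y := by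
  rw [wordfun_eq]
  have hex : ∃ y, stepfun ht C c v = some y := ⟨y, h⟩
  rw [dif_pos hex]
  obtain rfl : hex.choose = y := Option.some_injective _ (hex.choose_spec ▸ h ▸ rfl)
  rfl

end NSLU

/-- If `T` is a non-special ω₁-tree, `C ⊆ ω₁` a club, and `G` a `T`-graph with
cofinal ladders `c v` at limit-level nodes `v`, then there are `α ∈ C`, a node
`v` of height `α`, and nodes `u n > v` such that infinitely many points of the
ladders of the `u n` lie strictly below `v`. -/
theorem nonspecial_ladders_unbounded {T : Type} [PartialOrder T]
    (ht : T → Ordinal) (htree : IsOrderTree T) (hht : IsHeightFun ht)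
    (hω : IsOmegaOneTree ht)
    (hnotspecial : ¬ IsSpecialTree T)
    (C : Set Ordinal) (hC : IsClubIn C)
    (G : SimpleGraph T)
    (hcomp : ∀ a b : T, G.Adj a b → a < b ∨ b < a)
    (hlowcof : ∀ t s : T, s < t → ∃ u, G.Adj u t ∧ u < t ∧ s ≤ u)
    (c : T → ℕ → T)
    (hc : ∀ v : T, Order.IsSuccLimit (ht v) → ∀ n, c v n < v ∧ G.Adj (c v n) v)
    (hccof : ∀ v : T, Order.IsSuccLimit (ht v) → ∀ s, s < v → ∃ n, s ≤ c v n) :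
    ∃ α ∈ C, ∃ v : T, ht v = α ∧ ∃ u : ℕ → T, (∀ n, v < u n) ∧
      ((⋃ n, Set.range (c (u n))) ∩ {s | s < v}).Infinite := by
  classical
  obtain ⟨-, hchain0, hwfi⟩ := htree
  have hwf : WellFounded ((· < ·) : T → T → Prop) := hwfi.wf
  obtain ⟨hOm, -, -⟩ := hω
  by_contra h0
  push_neg at h0
  -- basic height lemmas
  have htlt : ∀ {s t : T}, s < t → ht s < ht t := by
    intro s t hst
    have h2 : ht s + 1 ≤ ht t := by
      rw [hht t]
      exact le_csSup (Ordinal.bddAbove_of_small) ⟨s, hst, rfl⟩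
    rwa [Ordinal.add_one_eq_succ, Order.succ_le_iff] at h2
  have htle : ∀ {s t : T}, s ≤ t → ht s ≤ ht t := by
    intro s t hst
    rcases eq_or_lt_of_le hst with rfl | h
    · exact le_rfl
    · exact (htlt h).le
  have hcompar : ∀ {x y w : T}, x ≤ w → y ≤ w → x ≤ y ∨ y ≤ x := by
    intro x y w hx hy
    rcases eq_or_lt_of_le hx with rfl | hx'
    · right; exact hy
    rcases eq_or_lt_of_le hy with rfl | hy'
    · left; exact hx'.le
    by_cases hxy : x = y
    · left; exact hxy.le
    · exact hchain0 w hx' hy' hxy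
  have heqht : ∀ {x y w : T}, x ≤ w → y ≤ w → ht x = ht y → x = y := by
    intro x y w hx hy hxy
    rcases hcompar hx hy with h | h
    · rcases eq_or_lt_of_le h with rfl | h'
      · rfl
      · exact absurd (htlt h') (by rw [hxy]; exact lt_irrefl _)
    · rcases eq_or_lt_of_le h with rfl | h'
      · rfl
      · exact absurd (htlt h') (by rw [hxy]; exact lt_irrefl _)
  have hltht : ∀ {x y w : T}, x ≤ w → y ≤ w → ht x < ht y → x < y := by
    intro x y w hx hy hxy
    rcases hcompar hx hy with h | h
    · rcases eq_or_lt_of_le h with rfl | h'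
      · exact absurd hxy (lt_irrefl _)
      · exact h'
    · exact absurd (htle h) (not_le.mpr hxy)
  -- fullness of branches
  have hfull : ∀ w : T, ∀ β, β ≤ ht w → ∃ x, x ≤ w ∧ ht x = β := by
    intro w
    refine hwf.induction (C := fun w => ∀ β, β ≤ ht w → ∃ x, x ≤ w ∧ ht x = β) w ?_
    intro w IH β hβ
    rcases eq_or_lt_of_le hβ with h | h
    · exact ⟨w, le_rfl, h.symm⟩
    · have hex : ∃ s, s < w ∧ β ≤ ht s := by
        by_contra hcon
        push_neg at hcon
        have hle : ht w ≤ β := by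
          rw [hht w]
          rcases Set.eq_empty_or_nonempty {s | s < w} with he | he
          · rw [he]
            simp only [Set.image_empty]
            rw [csSup_empty]
            exact zero_le
          · apply csSup_le (he.image _)
            rintro x ⟨s, hs, rfl⟩
            have h3 := hcon s hs
            show ht s + 1 ≤ β
            rwa [Ordinal.add_one_eq_succ, Order.succ_le_iff]
        exact absurd h (not_lt.mpr hle)
      obtain ⟨s, hsw, hβs⟩ := hex
      obtain ⟨x, hxs, hx⟩ := IH s hsw β hβs
      exact ⟨x, hxs.trans hsw.le, hx⟩
  -- club closure under sups
  have hbddC : ∀ D : Set Ordinal, D ⊆ C → BddAbove D := by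
    intro D hDC
    exact ⟨omega1, fun x hx => (hC.1 (hDC hx)).le⟩
  have hclub : ∀ D : Set Ordinal, D ⊆ C → D.Nonempty → sSup D < omega1 → sSup D ∈ C := by
    intro D hDC hDne hlt
    by_cases hmem : sSup D ∈ D
    · exact hDC hmem
    · obtain ⟨d, hd⟩ := hDne
      have hdle : d ≤ sSup D := le_csSup (hbddC D hDC) hd
      have hdlt : d < sSup D := by
        rcases eq_or_lt_of_le hdle with h | h
        · exact absurd (h ▸ hd) hmem
        · exact h
      apply hC.2.2 (sSup D) hlt (lt_of_le_of_lt zero_le hdlt)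
      apply le_antisymm
      · refine csSup_le ⟨d, hDC hd, hdlt⟩ ?_
        intro x hx
        exact hx.2.le
      · refine csSup_le_csSup (hbddC _ (fun x hx => hx.1)) ⟨d, hd⟩ ?_
        intro x hx
        refine ⟨hDC hx, ?_⟩
        have hxle : x ≤ sSup D := le_csSup (hbddC D hDC) hx
        rcases eq_or_lt_of_le hxle with h | h
        · exact absurd (h ▸ hx) hmem
        · exact h
  -- S_v is finite
  have hfin : ∀ v : T, ht v ∈ C → (NSLU.Sset ht c v).Finite := by
    intro v hv
    rw [← Set.not_infinite]
    intro hinf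
    have hemb := hinf.natEmbedding
    have hprop : ∀ k : ℕ, ((hemb k : T) ∈ NSLU.Sset ht c v) := fun k => (hemb k).2
    set u : ℕ → T := fun k => ((hprop k).1).choose with hudef
    have hu : ∀ k, v < u k ∧ Order.IsSuccLimit (ht (u k)) ∧ (hemb k : T) ∈ Set.range (c (u k)) :=
      fun k => ((hprop k).1).choose_spec
    refine (h0 (ht v) hv v rfl u (fun k => (hu k).1)).not_infinite ?_
    refine Set.infinite_of_injective_forall_mem (f := fun k : ℕ => (hemb k : T)) ?_ ?_
    · intro a b hab
      exact hemb.injective (Subtype.coe_injective hab)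
    · intro k
      exact ⟨Set.mem_iUnion.mpr ⟨k, (hu k).2.2⟩, (hprop k).2⟩
  -- gamma
  have hgam_le : ∀ {p v : T}, p ∈ NSLU.Sset ht c v → ht p ≤ NSLU.gam ht c v := by
    intro p v hp
    exact le_csSup (Ordinal.bddAbove_of_small) ⟨p, hp, rfl⟩
  have hgam_lt : ∀ {v : T}, ht v ∈ C → 0 < ht v → NSLU.gam ht c v < ht v := by
    intro v hv hvpos
    rcases Set.eq_empty_or_nonempty (NSLU.Sset ht c v) with h | h
    · unfold NSLU.gam
      rw [h]
      simp only [Set.image_empty]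
      rw [csSup_empty]
      exact hvpos
    · have hmem := (h.image ht).csSup_mem ((hfin v hv).image ht)
      obtain ⟨p, hp, hpe⟩ := hmem
      unfold NSLU.gam
      rw [← hpe]
      exact htlt hp.2
  -- Free set
  have hFree0 : ∀ {v : T}, 0 < ht v → (0 : Ordinal) ∈ NSLU.FreeSet ht C c v := by
    intro v hv
    exact ⟨hv, fun v' _ _ h => absurd h.1 (not_lt_of_ge zero_le)⟩
  have hbddFree : ∀ v : T, BddAbove (NSLU.FreeSet ht C c v) :=
    fun v => ⟨ht v, fun β hβ => hβ.1.le⟩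
  have hfree_le : ∀ {v : T} {β}, β ∈ NSLU.FreeSet ht C c v → β ≤ NSLU.bfun ht C c v :=
    fun h => le_csSup (hbddFree _) h
  have hb_le_gam : ∀ {v : T}, v ∈ NSLU.Vset ht C → NSLU.bfun ht C c v ≤ NSLU.gam ht c v := by
    intro v hv
    apply csSup_le ⟨0, hFree0 hv.2⟩
    intro β hβ
    by_contra hcon
    push_neg at hcon
    exact hβ.2 v hv le_rfl ⟨hcon, hβ.1⟩
  have hb_lt : ∀ {v : T}, v ∈ NSLU.Vset ht C → NSLU.bfun ht C c v < ht v :=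
    fun hv => lt_of_le_of_lt (hb_le_gam hv) (hgam_lt hv.1 hv.2)
  -- sup of P-style sets belongs to the set
  have hsupP : ∀ b : Ordinal, b < omega1 → ∀ _hne : ({α | α ∈ C ∧ 0 < α ∧ α ≤ b}).Nonempty,
      sSup {α | α ∈ C ∧ 0 < α ∧ α ≤ b} ∈ {α | α ∈ C ∧ 0 < α ∧ α ≤ b} := by
    intro b hb hne
    have hle : sSup {α | α ∈ C ∧ 0 < α ∧ α ≤ b} ≤ b := csSup_le hne fun α hα => hα.2.2
    have hpos : 0 < sSup {α | α ∈ C ∧ 0 < α ∧ α ≤ b} := by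
      obtain ⟨α, hα⟩ := hne
      exact lt_of_lt_of_le hα.2.1 (le_csSup ⟨b, fun x hx => hx.2.2⟩ hα)
    have hmemC : sSup {α | α ∈ C ∧ 0 < α ∧ α ≤ b} ∈ C :=
      hclub _ (fun α hα => hα.1) hne (lt_of_le_of_lt hle hb)
    exact ⟨hmemC, hpos, hle⟩
  have hPmem : ∀ {v : T}, v ∈ NSLU.Vset ht C → (NSLU.Pset ht C c v).Nonempty →
      NSLU.pifun ht C c v ∈ NSLU.Pset ht C c v := by
    intro v hv hne
    exact hsupP (NSLU.bfun ht C c v) (lt_trans (hb_lt hv) (hOm v)) hne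
  have hstep_some : ∀ {v : T}, v ∈ NSLU.Vset ht C → (NSLU.Pset ht C c v).Nonempty →
      ∃ y, NSLU.stepfun ht C c v = some y := by
    intro v hv hne
    have hπ := hPmem hv hne
    have hπlt : NSLU.pifun ht C c v < ht v := lt_of_le_of_lt hπ.2.2 (hb_lt hv)
    obtain ⟨y, hy, hyht⟩ := hfull v (NSLU.pifun ht C c v) hπlt.le
    have hylt : y < v := by
      rcases eq_or_lt_of_le hy with rfl | h
      · exact absurd hyht (ne_of_gt hπlt)
      · exact h
    have hcond : ∃ z, z ∈ NSLU.Vset ht C ∧ z < v ∧ ht z = NSLU.pifun ht C c v ∧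
        (NSLU.Pset ht C c v).Nonempty := by
      refine ⟨y, ?_, hylt, hyht, hne⟩
      show ht y ∈ C ∧ 0 < ht y
      rw [hyht]
      exact ⟨hπ.1, hπ.2.1⟩
    unfold NSLU.stepfun
    rw [dif_pos hcond]
    exact ⟨_, rfl⟩
  -- THE DEATH LEMMA: fibers of stepfun meet each branch finitely
  have hdeath : ∀ (o : Option T) (w₀ : T),
      {x | x ∈ NSLU.Vset ht C ∧ x ≤ w₀ ∧ NSLU.stepfun ht C c x = o}.Finite := by
    intro o w₀
    rw [← Set.not_infinite]
    intro hinf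
    set F := {x | x ∈ NSLU.Vset ht C ∧ x ≤ w₀ ∧ NSLU.stepfun ht C c x = o} with hFdef
    have hinjF : Set.InjOn ht F := fun x hx y hy hxy => heqht hx.2.1 hy.2.1 hxy
    have hH : (ht '' F).Infinite := hinf.image hinjF
    set H := ht '' F with hHdef
    set e : ℕ → Ordinal := fun k => Nat.rec (sInf H) (fun _ p => sInf (H \ Set.Iic p)) k with hedef
    have heS : ∀ k, e (k + 1) = sInf (H \ Set.Iic (e k)) := fun k => rfl
    have hInv : ∀ k, e k ∈ H ∧ (H \ Set.Iic (e k)).Infinite := by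
      intro k
      induction k with
      | zero =>
        refine ⟨csInf_mem hH.nonempty, ?_⟩
        have hsub : H \ {sInf H} ⊆ H \ Set.Iic (e 0) := by
          intro x hx
          refine ⟨hx.1, fun hle => hx.2 ?_⟩
          exact Set.mem_singleton_iff.mpr (le_antisymm hle (csInf_le (OrderBot.bddBelow _) hx.1))
        exact (hH.diff (Set.finite_singleton _)).mono hsub
      | succ k ih =>
        have hne := ih.2.nonempty
        have hmem : e (k + 1) ∈ H \ Set.Iic (e k) := by
          rw [heS]; exact csInf_mem hne
        refine ⟨hmem.1, ?_⟩
        have hsub : (H \ Set.Iic (e k)) \ {e (k + 1)} ⊆ H \ Set.Iic (e (k + 1)) := by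
          intro x hx
          refine ⟨hx.1.1, fun hle => hx.2 ?_⟩
          have hle2 : e (k + 1) ≤ x := by
            rw [heS]; exact csInf_le (OrderBot.bddBelow _) hx.1
          exact Set.mem_singleton_iff.mpr (le_antisymm hle hle2)
        exact (ih.2.diff (Set.finite_singleton _)).mono hsub
    have hemono : ∀ k, e k < e (k + 1) := by
      intro k
      have hmem : e (k + 1) ∈ H \ Set.Iic (e k) := by
        rw [heS]; exact csInf_mem (hInv k).2.nonempty
      exact not_le.mp fun h => hmem.2 h
    set δ := ⨆ k, e k with hδdef
    have helt : ∀ k, e k < δ := fun k => lt_of_lt_of_le (hemono k) (Ordinal.le_iSup e (k + 1))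
    have hδle : δ ≤ ht w₀ := by
      apply Ordinal.iSup_le
      intro k
      obtain ⟨x, hx, hxe⟩ := (hInv k).1
      rw [← hxe]
      exact htle hx.2.1
    have hδlim : Order.IsSuccLimit δ := by
      refine ⟨not_isMin_of_lt (helt 0), Order.isSuccPrelimit_of_succ_lt ?_⟩
      intro a ha
      obtain ⟨k, hk⟩ := Ordinal.lt_iSup_iff.mp ha
      exact lt_of_le_of_lt (Order.succ_le_of_lt hk) (helt k)
    obtain ⟨u, huw, hu⟩ := hfull w₀ δ hδle
    have hxk : ∀ k, ∃ x, x ∈ F ∧ ht x = e k := fun k => (hInv k).1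
    obtain ⟨x₁, hx₁F, hx₁e⟩ := hxk 0
    have hx₁u : x₁ < u := hltht hx₁F.2.1 huw (by rw [hu, hx₁e]; exact helt 0)
    have hulim : Order.IsSuccLimit (ht u) := hu ▸ hδlim
    obtain ⟨n, hn⟩ := hccof u hulim x₁ hx₁u
    have hpu : c u n < u := (hc u hulim n).1
    have hhtx₁p : ht x₁ ≤ ht (c u n) := htle hn
    have hhtpδ : ht (c u n) < δ := by rw [← hu]; exact htlt hpu
    obtain ⟨k, hk⟩ := Ordinal.lt_iSup_iff.mp hhtpδ
    obtain ⟨x, hxF, hxe⟩ := hxk k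
    have hxu : x < u := hltht hxF.2.1 huw (by rw [hu, hxe]; exact helt k)
    have hpx : c u n < x := hltht hpu.le hxu.le (by rw [hxe]; exact hk)
    have hfree : ht (c u n) ∈ NSLU.FreeSet ht C c x := by
      refine ⟨htlt hpx, ?_⟩
      rintro v' hv' hv'x ⟨h1, h2⟩
      have hv'u : v' < u := lt_of_le_of_lt hv'x hxu
      have hpv' : c u n < v' := hltht hpu.le hv'u.le h2
      have hmem : c u n ∈ NSLU.Sset ht c v' := ⟨⟨u, hv'u, hulim, ⟨n, rfl⟩⟩, hpv'⟩
      exact absurd h1 (not_lt.mpr (hgam_le hmem))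
    have hpb : ht (c u n) ≤ NSLU.bfun ht C c x := hfree_le hfree
    have hPx : ht x₁ ∈ NSLU.Pset ht C c x := ⟨hx₁F.1.1, hx₁F.1.2, le_trans hhtx₁p hpb⟩
    have hstx : NSLU.stepfun ht C c x = o := hxF.2.2
    cases o with
    | none =>
      obtain ⟨y, hy⟩ := hstep_some hxF.1 ⟨_, hPx⟩
      rw [hstx] at hy
      cases hy
    | some y =>
      have h1 := NSLU.stepfun_some hstx
      have h2 := NSLU.stepfun_some hx₁F.2.2
      have hyx₁ : ht y < ht x₁ := htlt h2.2.1
      have hle2 : ht x₁ ≤ NSLU.pifun ht C c x :=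
        le_csSup (hbddC _ (fun α hα => hα.1)) hPx
      rw [← h1.2.2] at hle2
      exact absurd (lt_of_lt_of_le hyx₁ hle2) (lt_irrefl _)
  -- rank strictly increases along comparable same-step pairs
  have hrank : ∀ {x v : T}, x ∈ NSLU.Vset ht C → v ∈ NSLU.Vset ht C → x < v →
      NSLU.stepfun ht C c x = NSLU.stepfun ht C c v →
      NSLU.rankfun ht C c x < NSLU.rankfun ht C c v := by
    intro x v hx hv hxv hst
    have hsub : {z | z ∈ NSLU.Vset ht C ∧ z < x ∧ NSLU.stepfun ht C c z = NSLU.stepfun ht C c x}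
        ⊂ {z | z ∈ NSLU.Vset ht C ∧ z < v ∧ NSLU.stepfun ht C c z = NSLU.stepfun ht C c v} := by
      constructor
      · intro z hz
        exact ⟨hz.1, lt_trans hz.2.1 hxv, hst ▸ hz.2.2⟩
      · intro hcon
        have := hcon ⟨hx, hxv, hst⟩
        exact absurd this.2.1 (lt_irrefl x)
    have hfin2 : {z | z ∈ NSLU.Vset ht C ∧ z < v ∧
        NSLU.stepfun ht C c z = NSLU.stepfun ht C c v}.Finite :=
      (hdeath (NSLU.stepfun ht C c v) v).subset (fun z hz => ⟨hz.1, hz.2.1.le, hz.2.2⟩)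
    exact Set.ncard_lt_ncard hsub hfin2
  -- words of comparable V-nodes differ
  have hword : ∀ v : T, v ∈ NSLU.Vset ht C → ∀ x : T, x ∈ NSLU.Vset ht C → x < v →
      NSLU.wordfun hwf ht C c x ≠ NSLU.wordfun hwf ht C c v := by
    intro v
    refine hwf.induction (C := fun v => v ∈ NSLU.Vset ht C → ∀ x : T, x ∈ NSLU.Vset ht C → x < v →
      NSLU.wordfun hwf ht C c x ≠ NSLU.wordfun hwf ht C c v) v ?_
    intro v IH hvV x hxV hxv heq
    by_cases hst : NSLU.stepfun ht C c x = NSLU.stepfun ht C c v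
    · have hlt := hrank hxV hvV hxv hst
      rw [NSLU.wordfun_eq hwf ht C c x, NSLU.wordfun_eq hwf ht C c v, List.cons.injEq] at heq
      exact absurd heq.1 (ne_of_lt hlt)
    · rcases hsx : NSLU.stepfun ht C c x with _ | y' <;>
        rcases hsv : NSLU.stepfun ht C c v with _ | y
      · exact hst (hsx.trans hsv.symm)
      · rw [NSLU.wordfun_none hwf hsx, NSLU.wordfun_some hwf hsv, List.cons.injEq] at heq
        have h2 := heq.2
        rw [NSLU.wordfun_eq hwf ht C c y] at h2
        cases h2
      · rw [NSLU.wordfun_some hwf hsx, NSLU.wordfun_none hwf hsv, List.cons.injEq] at heq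
        have h2 := heq.2
        rw [NSLU.wordfun_eq hwf ht C c y'] at h2
        cases h2
      · rw [NSLU.wordfun_some hwf hsx, NSLU.wordfun_some hwf hsv, List.cons.injEq] at heq
        have hy' := NSLU.stepfun_some hsx
        have hy := NSLU.stepfun_some hsv
        have hney : y' ≠ y := by
          rintro rfl
          exact hst (hsx.trans hsv.symm)
        rcases hcompar (le_of_lt (lt_trans hy'.2.1 hxv)) (le_of_lt hy.2.1) with h | h
        · exact IH y hy.2.1 hy.1 y' hy'.1 (lt_of_le_of_ne h hney) heq.2
        · exact IH y' (lt_trans hy'.2.1 hxv) hy'.1 y hy.1 (lt_of_le_of_ne h (Ne.symm hney)) heq.2.symm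
  -- countability of bounded ordinal intervals
  have hcnt : ∀ β : Ordinal, β < omega1 → (Set.Iio β).Countable := by
    intro β hβ
    rw [Cardinal.countable_iff_lt_aleph_one, Ordinal.mk_Iio_ordinal]
    rw [omega1, Cardinal.lt_ord] at hβ
    calc Cardinal.lift β.card < Cardinal.lift (Cardinal.aleph 1) := Cardinal.lift_lt.mpr hβ
      _ = Cardinal.aleph 1 := by rw [Cardinal.lift_aleph]; simp
  have homlim : Order.IsSuccLimit omega1 := Cardinal.isSuccLimit_ord (Cardinal.aleph0_le_aleph 1)
  have hnext : ∀ α : Ordinal, α < omega1 → ∃ β, β ∈ C ∧ α < β := by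
    intro α hα
    have hα1 : α + 1 < omega1 := by
      rw [Ordinal.add_one_eq_succ]
      exact homlim.succ_lt hα
    obtain ⟨b, hbC, hab⟩ := hC.2.1 (α + 1) hα1
    refine ⟨b, hbC, lt_of_lt_of_le ?_ hab⟩
    rw [Ordinal.add_one_eq_succ]
    exact Order.lt_succ α
  set nextC : Ordinal → Ordinal := fun α => sInf {β | β ∈ C ∧ α < β} with hnextCdef
  have hnextC : ∀ α : Ordinal, α < omega1 → nextC α ∈ C ∧ α < nextC α := by
    intro α hα
    exact csInf_mem (hnext α hα)
  have hginj : ∀ α : Ordinal, α < omega1 → ∃ f : Ordinal → ℕ, Set.InjOn f (Set.Iio (nextC α)) := by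
    intro α hα
    have h2 : nextC α < omega1 := hC.1 (hnextC α hα).1
    have hcnt2 := hcnt (nextC α) h2
    haveI := hcnt2.to_subtype
    obtain ⟨g, hg⟩ := (countable_iff_exists_injective ↥(Set.Iio (nextC α))).mp inferInstance
    refine ⟨fun x => if h : x ∈ Set.Iio (nextC α) then g ⟨x, h⟩ else 0, ?_⟩
    intro a haa b hbb hab
    simp only [dif_pos haa, dif_pos hbb] at hab
    exact congrArg Subtype.val (hg hab)
  set gcode : Ordinal → Ordinal → ℕ :=
    fun α => if h : α < omega1 then (hginj α h).choose else fun _ => 0 with hgcodedef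
  have hgcode : ∀ α : Ordinal, ∀ hα : α < omega1, Set.InjOn (gcode α) (Set.Iio (nextC α)) := by
    intro α hα
    have heqf : gcode α = (hginj α hα).choose := by rw [hgcodedef]; exact dif_pos hα
    rw [heqf]
    exact (hginj α hα).choose_spec
  -- the colouring
  set P0 : T → Set Ordinal := fun t => {α | α ∈ C ∧ 0 < α ∧ α ≤ ht t} with hP0def
  have hP0max : ∀ t : T, (P0 t).Nonempty → sSup (P0 t) ∈ P0 t :=
    fun t hne => hsupP (ht t) (hOm t) hne
  set vt : T → T := fun t =>
    if h : (P0 t).Nonempty then (hfull t (sSup (P0 t)) (hP0max t h).2.2).choose else t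
    with hvtdef
  have hvt : ∀ t : T, ∀ _h : (P0 t).Nonempty, vt t ≤ t ∧ ht (vt t) = sSup (P0 t) := by
    intro t h
    have heqv : vt t = (hfull t (sSup (P0 t)) (hP0max t h).2.2).choose := by
      rw [hvtdef]; exact dif_pos h
    rw [heqv]
    exact (hfull t (sSup (P0 t)) (hP0max t h).2.2).choose_spec
  set color : T → (List ℕ × ℕ) ⊕ ℕ := fun t =>
    if h : (P0 t).Nonempty then
      Sum.inl (NSLU.wordfun hwf ht C c (vt t), gcode (sSup (P0 t)) (ht t))
    else Sum.inr (gcode 0 (ht t)) with hcolordef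
  have hhigh_lt : ∀ t : T, ∀ _h : (P0 t).Nonempty, ht t < nextC (sSup (P0 t)) := by
    intro t h
    have hαom : sSup (P0 t) < omega1 := lt_of_le_of_lt (hP0max t h).2.2 (hOm t)
    by_contra hcon
    push_neg at hcon
    have hmemn := hnextC (sSup (P0 t)) hαom
    have hmem : nextC (sSup (P0 t)) ∈ P0 t :=
      ⟨hmemn.1, lt_of_le_of_lt zero_le hmemn.2, hcon⟩
    have hle3 : nextC (sSup (P0 t)) ≤ sSup (P0 t) :=
      le_csSup ⟨ht t, fun x hx => hx.2.2⟩ hmem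
    exact absurd hmemn.2 (not_lt.mpr hle3)
  have hlow_lt : ∀ t : T, ¬(P0 t).Nonempty → ht t < nextC 0 := by
    intro t h
    by_contra hcon
    push_neg at hcon
    have hmemn := hnextC 0 homlim.pos
    exact h ⟨nextC 0, hmemn.1, hmemn.2, hcon⟩
  have hcolor : ∀ a b : T, a < b → color a ≠ color b := by
    intro a b hab heq
    by_cases hPa : (P0 a).Nonempty
    · have hPb : (P0 b).Nonempty := by
        obtain ⟨α, hα⟩ := hPa
        exact ⟨α, hα.1, hα.2.1, le_trans hα.2.2 (htle hab.le)⟩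
      rw [hcolordef] at heq
      simp only [dif_pos hPa, dif_pos hPb, Sum.inl.injEq, Prod.mk.injEq] at heq
      obtain ⟨hw, hg⟩ := heq
      have hA := hvt a hPa
      have hB := hvt b hPb
      have hVa : vt a ∈ NSLU.Vset ht C := by
        show ht (vt a) ∈ C ∧ 0 < ht (vt a)
        rw [hA.2]
        exact ⟨(hP0max a hPa).1, (hP0max a hPa).2.1⟩
      have hVb : vt b ∈ NSLU.Vset ht C := by
        show ht (vt b) ∈ C ∧ 0 < ht (vt b)
        rw [hB.2]
        exact ⟨(hP0max b hPb).1, (hP0max b hPb).2.1⟩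
      by_cases hvv : vt a = vt b
      · have hsup_eq : sSup (P0 a) = sSup (P0 b) := by
          rw [← hA.2, ← hB.2, hvv]
        have hαom : sSup (P0 a) < omega1 := lt_of_le_of_lt (hP0max a hPa).2.2 (hOm a)
        have hlta := hhigh_lt a hPa
        have hltb := hhigh_lt b hPb
        rw [← hsup_eq] at hltb hg
        have hheq : ht a = ht b := hgcode (sSup (P0 a)) hαom hlta hltb hg
        exact absurd (heqht hab.le le_rfl hheq) (ne_of_lt hab)
      · rcases hcompar (le_trans hA.1 hab.le) hB.1 with h | h
        · exact hword (vt b) hVb (vt a) hVa (lt_of_le_of_ne h hvv) hw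
        · exact hword (vt a) hVa (vt b) hVb (lt_of_le_of_ne h (Ne.symm hvv)) hw.symm
    · by_cases hPb : (P0 b).Nonempty
      · rw [hcolordef] at heq
        simp only [dif_neg hPa, dif_pos hPb] at heq
        cases heq
      · rw [hcolordef] at heq
        simp only [dif_neg hPa, dif_neg hPb, Sum.inr.injEq] at heq
        have hheq : ht a = ht b :=
          hgcode 0 homlim.pos (hlow_lt a hPa) (hlow_lt b hPb) heq
        exact absurd (heqht hab.le le_rfl hheq) (ne_of_lt hab)
  -- assemble the specialization
  apply hnotspecial
  refine ⟨fun n => {t | Encodable.encode (color t) = n}, ?_, ?_⟩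
  · intro n t htn s hsn hne hle
    have hcol : color t = color s := Encodable.encode_injective (htn.trans hsn.symm)
    exact hcolor t s (lt_of_le_of_ne hle hne) hcol
  · ext t
    simp only [Set.mem_iUnion, Set.mem_setOf_eq, Set.mem_univ, iff_true]
    exact ⟨Encodable.encode (color t), rfl⟩
end

section
/- Let G be a graph, ε an end of G, and U a countable vertex set. If there is an uncountable collection 𝒞 of pairwise internally disjoint ε–U combs in G, then ε contains a |𝒞|-star of rays whose leaf rays are the spines of a subfamily of combs in 𝒞. -/
/-- A ray in a graph: an injective one-way infinite path. -/
def IsRay {V : Type*} (G : SimpleGraph V) (r : ℕ → V) : Prop :=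
  Function.Injective r ∧ ∀ n, G.Adj (r n) (r (n + 1))

/-- A finite path of length `m` in a graph, given as a function on `ℕ`. -/
def IsFinPath {V : Type*} (G : SimpleGraph V) (m : ℕ) (q : ℕ → V) : Prop :=
  Set.InjOn q (Set.Iic m) ∧ ∀ k < m, G.Adj (q k) (q (k + 1))

/-- The vertex set of a finite path of length `m`. -/
def finPathSet {V : Type*} (m : ℕ) (q : ℕ → V) : Set V := q '' Set.Iic m

/-- Two rays are equivalent (lie in the same end) if no finite vertex set
separates them: after deleting any finite set, a tail vertex of the first ray
can reach a tail vertex of the second in the remaining graph. -/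
def RayEquiv {V : Type*} (G : SimpleGraph V) (r s : ℕ → V) : Prop :=
  ∀ S : Set V, S.Finite → ∃ (i j : ℕ) (hi : r i ∈ Sᶜ) (hj : s j ∈ Sᶜ),
    (G.induce Sᶜ).Reachable ⟨r i, hi⟩ ⟨s j, hj⟩

/-- `R` together with the leaf rays `leaf i` forms a star of rays: the rays are
pairwise disjoint, each leaf ray sends infinitely many disjoint paths to the
central ray `R`, and paths from distinct families meet only in `R`. -/
def IsStarOfRays {V : Type*} {ι : Type*} (G : SimpleGraph V) (R : ℕ → V)
    (leaf : ι → ℕ → V) : Prop :=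
  IsRay G R ∧ (∀ i, IsRay G (leaf i)) ∧
  (∀ i j, i ≠ j → Disjoint (Set.range (leaf i)) (Set.range (leaf j))) ∧
  (∀ i, Disjoint (Set.range (leaf i)) (Set.range R)) ∧
  ∃ (len : ι → ℕ → ℕ) (p : ι → ℕ → ℕ → V),
    (∀ i n, IsFinPath G (len i n) (p i n)) ∧
    (∀ i n, p i n 0 ∈ Set.range (leaf i)) ∧
    (∀ i n, p i n (len i n) ∈ Set.range R) ∧
    (∀ i m n, m ≠ n →
      Disjoint (finPathSet (len i m) (p i m)) (finPathSet (len i n) (p i n))) ∧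
    (∀ i j, i ≠ j → ∀ m n x, x ∈ finPathSet (len i m) (p i m) →
      x ∈ finPathSet (len j n) (p j n) → x ∈ Set.range R)

/-- The graph `G` contains a `κ`-star of rays. -/
def HasStarOfRays {V : Type*} (G : SimpleGraph V) (κ : Cardinal) : Prop :=
  ∃ (ι : Type) (R : ℕ → V) (leaf : ι → ℕ → V),
    Cardinal.mk ι = κ ∧ IsStarOfRays G R leaf

/-- An `ε`–`U` comb: a spine ray disjoint from `U` together with an infinite
family of pairwise disjoint spine–`U` paths (bristles) whose only vertex in `U`
is the final one (the tooth). -/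
structure Comb {V : Type*} (G : SimpleGraph V) (U : Set V) where
  spine : ℕ → V
  spine_ray : IsRay G spine
  spine_disj : ∀ n, spine n ∉ U
  len : ℕ → ℕ
  bristle : ℕ → ℕ → V
  bristle_path : ∀ n, IsFinPath G (len n) (bristle n)
  bristle_start : ∀ n, bristle n 0 ∈ Set.range spine
  bristle_tooth : ∀ n, bristle n (len n) ∈ U
  bristle_internal : ∀ n, ∀ k < len n, bristle n k ∉ U
  bristle_disj : ∀ m n, m ≠ n →
    Disjoint (finPathSet (len m) (bristle m)) (finPathSet (len n) (bristle n))

/-- The interior of a comb: all its vertices outside `U`. -/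
def Comb.interior {V : Type*} {G : SimpleGraph V} {U : Set V}
    (c : Comb G U) : Set V :=
  (Set.range c.spine ∪ ⋃ n, finPathSet (c.len n) (c.bristle n)) \ U


namespace CombStar

variable {V : Type*} {G : SimpleGraph V}

/-- Glue two lists sharing a junction vertex. -/
def glue (l₁ l₂ : List V) : List V := l₁ ++ l₂.tail

theorem glue_ne {l₁ : List V} (h₁ : l₁ ≠ []) (l₂ : List V) : glue l₁ l₂ ≠ [] := by
  simp [glue, h₁]

theorem mem_glue {l₁ l₂ : List V} {v : V} :
    v ∈ glue l₁ l₂ ↔ v ∈ l₁ ∨ v ∈ l₂.tail := by simp [glue]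

theorem mem_tail_sub {l : List V} {v : V} (h : v ∈ l.tail) : v ∈ l := by
  cases l with
  | nil => simp at h
  | cons a t => exact List.mem_cons_of_mem a h

theorem subset_glue_right {l₁ l₂ : List V} (h₁ : l₁ ≠ []) (h₂ : l₂ ≠ [])
    (hj : l₁.getLast h₁ = l₂.head h₂) {v : V} (hv : v ∈ l₂) : v ∈ glue l₁ l₂ := by
  have he : l₂.head h₂ :: l₂.tail = l₂ := List.cons_head_tail h₂
  rw [← he] at hv
  rcases List.eq_or_mem_of_mem_cons hv with h | h
  · subst h
    exact mem_glue.2 (Or.inl (hj ▸ List.getLast_mem h₁))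
  · exact mem_glue.2 (Or.inr h)

theorem glue_head {l₁ l₂ : List V} (h₁ : l₁ ≠ []) :
    (glue l₁ l₂).head (glue_ne h₁ l₂) = l₁.head h₁ := by
  show (l₁ ++ l₂.tail).head _ = l₁.head h₁
  exact List.head_append_of_ne_nil h₁

theorem glue_getLast {l₁ : List V} (h₁ : l₁ ≠ []) :
    ∀ {l₂ : List V} (h₂ : l₂ ≠ []), l₁.getLast h₁ = l₂.head h₂ →
      (glue l₁ l₂).getLast (glue_ne h₁ l₂) = l₂.getLast h₂
  | [], h₂, _ => absurd rfl h₂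
  | a :: t, _, hj => by
    cases t with
    | nil =>
      show (l₁ ++ []).getLast _ = _
      simp only [List.append_nil]
      exact hj
    | cons b t' =>
      show (l₁ ++ (b :: t')).getLast _ = _
      refine (List.getLast_append_of_ne_nil _ (List.cons_ne_nil b t')).trans ?_
      simp

theorem glue_chain' {l₁ l₂ : List V} (h₁ : l₁ ≠ []) (h₂ : l₂ ≠ [])
    (hj : l₁.getLast h₁ = l₂.head h₂) (c₁ : l₁.Chain' G.Adj) (c₂ : l₂.Chain' G.Adj) :
    (glue l₁ l₂).Chain' G.Adj := by
  unfold List.Chain' at *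
  rw [glue, List.isChain_append]
  refine ⟨c₁, c₂.tail, ?_⟩
  intro x hx y hy
  rw [List.getLast?_eq_getLast h₁] at hx
  have hx' : l₁.getLast h₁ = x := by simpa using hx
  have hc : (l₂.head h₂ :: l₂.tail).IsChain G.Adj := by
    rw [List.cons_head_tail]; exact c₂
  rw [List.isChain_cons] at hc
  rw [← hx', hj]
  exact hc.1 y hy

theorem glue_nodup {l₁ l₂ : List V} (n₁ : l₁.Nodup) (n₂ : l₂.Nodup)
    (hd : ∀ v ∈ l₁, v ∉ l₂.tail) : (glue l₁ l₂).Nodup := by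
  rw [glue, List.nodup_append]
  exact ⟨n₁, n₂.sublist (List.tail_sublist l₂), fun v hv w hw hvw => hd v hv (hvw ▸ hw)⟩

theorem glue_length {l₁ l₂ : List V} : (glue l₁ l₂).length = l₁.length + l₂.tail.length :=
  List.length_append

theorem glue_prefix (l₁ l₂ : List V) : l₁ <+: glue l₁ l₂ := List.prefix_append _ _

theorem mem_tail_of_nodup {l : List V} (ne : l ≠ []) (nd : l.Nodup) {v : V}
    (h : v ∈ l.tail) : v ∈ l ∧ v ≠ l.head ne := by
  refine ⟨mem_tail_sub h, fun hv => ?_⟩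
  have hc : (l.head ne :: l.tail).Nodup := by rw [List.cons_head_tail]; exact nd
  exact (List.nodup_cons.1 hc).1 (hv ▸ h)

theorem mem_dropLast_of_nodup {l : List V} (ne : l ≠ []) (nd : l.Nodup) {v : V}
    (h : v ∈ l.dropLast) : v ∈ l ∧ v ≠ l.getLast ne := by
  refine ⟨List.dropLast_subset l h, fun hv => ?_⟩
  have hnd : (l.dropLast ++ [l.getLast ne]).Nodup := by
    rw [List.dropLast_append_getLast]; exact nd
  exact (List.nodup_append.1 hnd).2.2 v h (l.getLast ne) (by simp) hv

theorem mem_split_getLast {l : List V} (ne : l ≠ []) {v : V} (h : v ∈ l) :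
    v ∈ l.dropLast ∨ v = l.getLast ne := by
  rw [← List.dropLast_append_getLast ne, List.mem_append] at h
  rcases h with h | h
  · exact Or.inl h
  · exact Or.inr (by simpa using h)

theorem tail_prefix_of_prefix {l₁ l₂ : List V} (h : l₁ <+: l₂) : l₁.tail <+: l₂.tail := by
  obtain ⟨t, rfl⟩ := h
  cases l₁ with
  | nil => simp
  | cons a s => simp

end CombStar
namespace CombStar
variable {V : Type*} {G : SimpleGraph V}

/-- Ascending segment of a ray/path function from index `a` to `b`. -/
def ascSeg (q : ℕ → V) (a b : ℕ) : List V := (List.range (b + 1 - a)).map fun k => q (a + k)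

theorem ascSeg_ne {a b : ℕ} (h : a ≤ b) (q : ℕ → V) : ascSeg q a b ≠ [] := by
  simp only [ascSeg, ne_eq, List.map_eq_nil_iff, List.range_eq_nil]
  omega

theorem ascSeg_length (q : ℕ → V) (a b : ℕ) : (ascSeg q a b).length = b + 1 - a := by
  simp [ascSeg]

theorem ascSeg_getElem (q : ℕ → V) (a b : ℕ) {i : ℕ} (hi : i < (ascSeg q a b).length) :
    (ascSeg q a b)[i] = q (a + i) := by
  simp [ascSeg]

theorem ascSeg_head {a b : ℕ} (h : a ≤ b) (q : ℕ → V) :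
    (ascSeg q a b).head (ascSeg_ne h q) = q a := by
  rw [List.head_eq_getElem, ascSeg_getElem]
  congr 1

theorem ascSeg_getLast {a b : ℕ} (h : a ≤ b) (q : ℕ → V) :
    (ascSeg q a b).getLast (ascSeg_ne h q) = q b := by
  rw [List.getLast_eq_getElem, ascSeg_getElem, ascSeg_length]
  congr 1
  omega

theorem ascSeg_mem {a b : ℕ} {q : ℕ → V} {v : V} (h : v ∈ ascSeg q a b) :
    ∃ k, a ≤ k ∧ k ≤ b ∧ q k = v := by
  simp only [ascSeg, List.mem_map, List.mem_range] at h
  obtain ⟨k, hk, rfl⟩ := h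
  exact ⟨a + k, by omega, by omega, rfl⟩

theorem mem_ascSeg {a b k : ℕ} (q : ℕ → V) (h1 : a ≤ k) (h2 : k ≤ b) :
    q k ∈ ascSeg q a b := by
  simp only [ascSeg, List.mem_map, List.mem_range]
  exact ⟨k - a, by omega, by congr 1; omega⟩

theorem ascSeg_chain' {a b : ℕ} {q : ℕ → V}
    (h : ∀ k, a ≤ k → k < b → G.Adj (q k) (q (k + 1))) :
    (ascSeg q a b).Chain' G.Adj := by
  unfold List.Chain'
  rw [List.isChain_iff_getElem]
  intro i hi
  simp only [List.get_eq_getElem, ascSeg_getElem]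
  rw [ascSeg_length] at hi
  rw [show a + (i + 1) = (a + i) + 1 by omega]
  exact h (a + i) (by omega) (by omega)

theorem ascSeg_nodup {a b : ℕ} {q : ℕ → V} (h : Set.InjOn q (Set.Icc a b)) :
    (ascSeg q a b).Nodup := by
  refine List.Nodup.map_on ?_ List.nodup_range
  intro x hx y hy hxy
  simp only [List.mem_range] at hx hy
  rcases Nat.lt_or_ge b.succ a with hba | hba
  · omega
  · have := h (show a + x ∈ Set.Icc a b from ⟨by omega, by omega⟩)
      (show a + y ∈ Set.Icc a b from ⟨by omega, by omega⟩) hxy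
    omega

theorem chain'_adj_reverse {l : List V} (h : l.Chain' G.Adj) : l.reverse.Chain' G.Adj := by
  unfold List.Chain' at *
  rw [List.isChain_reverse]
  exact h.imp fun a b hab => hab.symm

/-- Extract an `S`-avoiding path list from reachability in the induced subgraph. -/
theorem exists_list_of_reachable {S : Set V} {a b : V} {ha : a ∈ Sᶜ} {hb : b ∈ Sᶜ}
    (h : (G.induce Sᶜ).Reachable ⟨a, ha⟩ ⟨b, hb⟩) :
    ∃ (l : List V) (ne : l ≠ []), l.head ne = a ∧ l.getLast ne = b ∧
      l.Chain' G.Adj ∧ l.Nodup ∧ ∀ v ∈ l, v ∉ S := by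
  classical
  obtain ⟨w⟩ := h
  let p := w.toPath
  refine ⟨p.1.support.map Subtype.val,
    fun hnil => p.1.support_ne_nil (List.map_eq_nil_iff.1 hnil), ?_, ?_, ?_, ?_, ?_⟩
  · rw [List.head_map]
    rw [SimpleGraph.Walk.head_support]
  · rw [List.getLast_map]
    rw [SimpleGraph.Walk.getLast_support]
  · exact List.isChain_map_of_isChain Subtype.val (fun x y hxy => hxy) p.1.isChain_adj_support
  · exact p.2.support_nodup.map Subtype.val_injective
  · intro v hv
    simp only [List.mem_map] at hv
    obtain ⟨⟨x, hx⟩, _, rfl⟩ := hv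
    exact hx

theorem reachable_of_chain {S : Set V} :
    ∀ (l : List V) (ne : l ≠ []) (_ : l.Chain' G.Adj) (hS : ∀ v ∈ l, v ∉ S)
      (ha : l.head ne ∈ Sᶜ) (hb : l.getLast ne ∈ Sᶜ),
      (G.induce Sᶜ).Reachable ⟨l.head ne, ha⟩ ⟨l.getLast ne, hb⟩
  | [], ne, _, _, _, _ => absurd rfl ne
  | [a], _, _, _, _, _ => SimpleGraph.Reachable.refl _
  | a :: b :: t, _, ch, hS, ha, hb => by
    unfold List.Chain' at ch
    rw [List.isChain_cons_cons] at ch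
    have hb' : b ∈ Sᶜ := hS b (by simp)
    have step : (G.induce Sᶜ).Adj ⟨a, ha⟩ ⟨b, hb'⟩ := ch.1
    have rest := reachable_of_chain (b :: t) (by simp) ch.2
      (fun v hv => hS v (List.mem_cons_of_mem a hv)) hb' (by
        have : (a :: b :: t).getLast (by simp) = (b :: t).getLast (by simp) := by
          rw [List.getLast_cons]
        exact this ▸ hb)
    have hlast : (a :: b :: t).getLast (by simp) = (b :: t).getLast (by simp) := by
      rw [List.getLast_cons]
    refine step.reachable.trans ?_
    convert rest using 2
    rfl

/-- Truncate a list at the first vertex in `T` (the last vertex is in `T`). -/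
theorem trunc_first {T : Set V} :
    ∀ (l : List V) (ne : l ≠ []), l.getLast ne ∈ T →
      ∃ (l' : List V) (ne' : l' ≠ []), l' <+: l ∧ l'.head ne' = l.head ne ∧
        l'.getLast ne' ∈ T ∧ ∀ v ∈ l'.dropLast, v ∉ T
  | [], ne, _ => absurd rfl ne
  | a :: t, _, hb => by
    classical
    by_cases haT : a ∈ T
    · exact ⟨[a], by simp, ⟨t, rfl⟩, rfl, by simpa using haT, by simp⟩
    · have hte : t ≠ [] := by
        rintro rfl
        exact haT (by simpa using hb)
      have hb' : t.getLast hte ∈ T := by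
        rwa [List.getLast_cons hte] at hb
      obtain ⟨l', ne', hpre, hhead, hlast, hdrop⟩ := trunc_first t hte hb'
      refine ⟨a :: l', by simp, ?_, by simp, ?_, ?_⟩
      · obtain ⟨s, rfl⟩ := hpre
        exact ⟨s, rfl⟩
      · rwa [List.getLast_cons ne']
      · intro v hv
        have : (a :: l').dropLast = a :: l'.dropLast := by
          cases l' with
          | nil => exact absurd rfl ne'
          | cons x s => simp
        rw [this] at hv
        rcases List.eq_or_mem_of_mem_cons hv with h | h
        · subst h; exact haT
        · exact hdrop v h

/-- Truncate a list from the last vertex in `T` (the head is in `T`). -/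
theorem trunc_last {T : Set V} (l : List V) (ne : l ≠ []) (hh : l.head ne ∈ T) :
    ∃ (l' : List V) (ne' : l' ≠ []), l' <:+ l ∧ l'.getLast ne' = l.getLast ne ∧
      l'.head ne' ∈ T ∧ ∀ v ∈ l'.tail, v ∉ T := by
  have ner : l.reverse ≠ [] := by simpa using ne
  have hr : l.reverse.getLast ner ∈ T := by rwa [List.getLast_reverse]
  obtain ⟨p, nep, hpre, hhead, hlast, hdrop⟩ := trunc_first l.reverse ner hr
  have nepr : p.reverse ≠ [] := by simpa using nep
  refine ⟨p.reverse, nepr, ?_, ?_, ?_, ?_⟩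
  · rw [← List.reverse_reverse l]
    exact List.reverse_suffix.2 hpre
  · rw [List.getLast_reverse, hhead, List.head_reverse]
  · rwa [List.head_reverse]
  · intro v hv
    rw [List.tail_reverse] at hv
    exact hdrop v (List.mem_reverse.1 hv)

end CombStar
open List

namespace CombStar

section CombLemmas

variable {V : Type*} {G : SimpleGraph V} {U : Set V} {ι : Type} (c : ι → Comb G U)

/-- The `n`-th tooth of comb `i`. -/
def toothOf (i : ι) (n : ℕ) : V := (c i).bristle n ((c i).len n)

/-- Vertices of `U` that are teeth of infinitely many combs. -/
def bigU3 : Set V := {u | {i : ι | ∃ n, toothOf c i n = u}.Infinite}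

variable {c}

theorem tooth_mem_U (i : ι) (n : ℕ) : toothOf c i n ∈ U := (c i).bristle_tooth n

theorem spine_mem_interior (i : ι) (a : ℕ) : (c i).spine a ∈ (c i).interior :=
  ⟨Or.inl ⟨a, rfl⟩, (c i).spine_disj a⟩

theorem mem_finPathSet {i : ι} {m k : ℕ} (hk : k ≤ (c i).len m) :
    (c i).bristle m k ∈ finPathSet ((c i).len m) ((c i).bristle m) :=
  ⟨k, Set.mem_Iic.2 hk, rfl⟩

theorem bristle_mem_interior (i : ι) (m : ℕ) {k : ℕ} (hk : k < (c i).len m) :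
    (c i).bristle m k ∈ (c i).interior :=
  ⟨Or.inr (Set.mem_iUnion.2 ⟨m, mem_finPathSet (le_of_lt hk)⟩),
    (c i).bristle_internal m k hk⟩

theorem interior_not_U {i : ι} {x : V} (h : x ∈ (c i).interior) : x ∉ U := h.2

theorem interior_cases {i : ι} {x : V} (hx : x ∈ (c i).interior) :
    (∃ a, (c i).spine a = x) ∨ ∃ m k, k < (c i).len m ∧ (c i).bristle m k = x := by
  obtain ⟨h1, h2⟩ := hx
  rcases h1 with ⟨a, rfl⟩ | h1
  · exact Or.inl ⟨a, rfl⟩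
  · obtain ⟨m, hm⟩ := Set.mem_iUnion.1 h1
    obtain ⟨k, hk, rfl⟩ := hm
    refine Or.inr ⟨m, k, lt_of_le_of_ne (Set.mem_Iic.1 hk) fun hkl => ?_, rfl⟩
    subst hkl
    exact h2 ((c i).bristle_tooth m)

theorem finPathSet_cases {i : ι} {m : ℕ} {x : V}
    (hx : x ∈ finPathSet ((c i).len m) ((c i).bristle m)) :
    x ∈ (c i).interior ∨ x = toothOf c i m := by
  obtain ⟨k, hk, rfl⟩ := hx
  rcases eq_or_lt_of_le (Set.mem_Iic.1 hk) with h | h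
  · exact Or.inr (by rw [toothOf, ← h])
  · exact Or.inl (bristle_mem_interior i m h)

variable (hdisj : ∀ i j, i ≠ j → Disjoint (c i).interior (c j).interior)

include hdisj in
theorem interior_unique {i j : ι} {x : V} (hi : x ∈ (c i).interior)
    (hj : x ∈ (c j).interior) : i = j := by
  by_contra h
  exact Set.disjoint_left.1 (hdisj i j h) hi hj

include hdisj in
theorem meets_countable {B : Set V} (hB : B.Countable) :
    {i : ι | ∃ v ∈ B, v ∈ (c i).interior}.Countable := by
  haveI : Countable ↥B := hB.to_subtype
  rw [← Set.countable_coe_iff]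
  have hf : ∀ i : {i : ι | ∃ v ∈ B, v ∈ (c i).interior},
      ∃ v : ↥B, (v : V) ∈ (c (i : ι)).interior :=
    fun ⟨i, hi⟩ => ⟨⟨hi.choose, hi.choose_spec.1⟩, hi.choose_spec.2⟩
  choose f hfs using hf
  have hinj : Function.Injective f := by
    intro i j hij
    have h1 := hfs i
    have h2 := hfs j
    rw [hij] at h1
    exact Subtype.ext (interior_unique hdisj h1 h2)
  exact hinj.countable

include hdisj in
theorem meets_finite {B : Set V} (hB : B.Finite) :
    {i : ι | ∃ v ∈ B, v ∈ (c i).interior}.Finite := by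
  haveI : Finite ↥B := hB
  rw [← Set.finite_coe_iff]
  have hf : ∀ i : {i : ι | ∃ v ∈ B, v ∈ (c i).interior},
      ∃ v : ↥B, (v : V) ∈ (c (i : ι)).interior :=
    fun ⟨i, hi⟩ => ⟨⟨hi.choose, hi.choose_spec.1⟩, hi.choose_spec.2⟩
  choose f hfs using hf
  have hinj : Function.Injective f := by
    intro i j hij
    have h1 := hfs i
    have h2 := hfs j
    rw [hij] at h1
    exact Subtype.ext (interior_unique hdisj h1 h2)
  exact Finite.of_injective f hinj

include hdisj in
theorem select {u : V} (hu : u ∈ bigU3 c) (A : List V) :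
    ∃ d : ι, (∃ n, toothOf c d n = u) ∧ ∀ v ∈ A, v ∉ (c d).interior := by
  have hfin := meets_finite hdisj A.finite_toSet
  obtain ⟨d, hd⟩ := ((hu : Set.Infinite _).diff hfin).nonempty
  exact ⟨d, hd.1, fun v hv hvi => hd.2 ⟨v, hv, hvi⟩⟩

theorem bad_teeth_countable (hU : U.Countable) :
    {i : ι | ∃ n, toothOf c i n ∉ bigU3 c}.Countable := by
  classical
  have hsub : {i : ι | ∃ n, toothOf c i n ∉ bigU3 c} ⊆
      ⋃ u ∈ (U \ bigU3 c), {i : ι | ∃ n, toothOf c i n = u} := by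
    rintro i ⟨n, hn⟩
    exact Set.mem_biUnion ⟨tooth_mem_U i n, hn⟩ ⟨n, rfl⟩
  refine Set.Countable.mono hsub ?_
  refine Set.Countable.biUnion (hU.mono Set.diff_subset) ?_
  intro u hu
  have : ¬ {i : ι | ∃ n, toothOf c i n = u}.Infinite := hu.2
  exact (Set.not_infinite.1 this).countable

end CombLemmas

end CombStar
open List

namespace CombStar

section PathLemmas

variable {V : Type*} {G : SimpleGraph V}

theorem ray_reachable_le {r : ℕ → V} (hr : IsRay G r) {S : Set V} {K a b : ℕ}
    (h : ∀ k, K ≤ k → r k ∉ S) (ha : K ≤ a) (hab : a ≤ b) :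
    (G.induce Sᶜ).Reachable ⟨r a, h a ha⟩ ⟨r b, h b (le_trans ha hab)⟩ := by
  have hc : (ascSeg r a b).Chain' G.Adj := ascSeg_chain' (fun k _ _ => hr.2 k)
  have hmem : ∀ v ∈ ascSeg r a b, v ∉ S := by
    intro v hv
    obtain ⟨k, h1, _, rfl⟩ := ascSeg_mem hv
    exact h k (le_trans ha h1)
  have hh : (ascSeg r a b).head (ascSeg_ne hab r) ∈ Sᶜ := by
    rw [ascSeg_head hab r]; exact h a ha
  have hl : (ascSeg r a b).getLast (ascSeg_ne hab r) ∈ Sᶜ := by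
    rw [ascSeg_getLast hab r]; exact h b (le_trans ha hab)
  have := reachable_of_chain (ascSeg r a b) (ascSeg_ne hab r) hc hmem hh hl
  convert this using 2
  · exact (ascSeg_head hab r).symm
  · exact (ascSeg_getLast hab r).symm

theorem ray_reachable {r : ℕ → V} (hr : IsRay G r) {S : Set V} {K a b : ℕ}
    (h : ∀ k, K ≤ k → r k ∉ S) (ha : K ≤ a) (hb : K ≤ b) :
    (G.induce Sᶜ).Reachable ⟨r a, h a ha⟩ ⟨r b, h b hb⟩ := by
  rcases le_total a b with hab | hab
  · exact ray_reachable_le hr h ha hab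
  · exact (ray_reachable_le hr h hb hab).symm

variable {U : Set V} {ι : Type} {c : ι → Comb G U}

theorem spine_seg (i : ι) (a b : ℕ) :
    ∃ (l : List V) (ne : l ≠ []), l.head ne = (c i).spine a ∧
      l.getLast ne = (c i).spine b ∧ l.Chain' G.Adj ∧ l.Nodup ∧
      ∀ v ∈ l, ∃ k, (c i).spine k = v := by
  have hray := (c i).spine_ray
  rcases le_total a b with hab | hab
  · refine ⟨ascSeg (c i).spine a b, ascSeg_ne hab _, ascSeg_head hab _,
      ascSeg_getLast hab _, ascSeg_chain' (fun k _ _ => hray.2 k),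
      ascSeg_nodup hray.1.injOn, ?_⟩
    intro v hv
    obtain ⟨k, _, _, rfl⟩ := ascSeg_mem hv
    exact ⟨k, rfl⟩
  · have ne : (ascSeg (c i).spine b a).reverse ≠ [] := by
      simpa using ascSeg_ne hab (c i).spine
    refine ⟨(ascSeg (c i).spine b a).reverse, ne, ?_, ?_,
      chain'_adj_reverse (ascSeg_chain' (fun k _ _ => hray.2 k)),
      (List.nodup_reverse.2 (ascSeg_nodup hray.1.injOn)), ?_⟩
    · rw [List.head_reverse, ascSeg_getLast hab]
    · rw [List.getLast_reverse, ascSeg_head hab]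
    · intro v hv
      obtain ⟨k, _, _, rfl⟩ := ascSeg_mem (List.mem_reverse.1 hv)
      exact ⟨k, rfl⟩

/-- A path from a spine vertex of comb `i` to its `n`-th tooth, within the comb. -/
theorem comb_path_from_spine (i : ι) (a n : ℕ) :
    ∃ (l : List V) (ne : l ≠ []), l.head ne = (c i).spine a ∧
      l.getLast ne = toothOf c i n ∧ l.Chain' G.Adj ∧ l.Nodup ∧
      ∀ v ∈ l, v ∈ Set.range (c i).spine ∨
        v ∈ finPathSet ((c i).len n) ((c i).bristle n) := by
  classical
  set b := (c i).bristle n with hb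
  set L := (c i).len n with hL
  set P : ℕ → Prop := fun k => b k ∈ Set.range (c i).spine with hP
  set ks : ℕ := Nat.findGreatest P L with hks
  have hP0 : P 0 := (c i).bristle_start n
  have hPks : P ks := Nat.findGreatest_spec (Nat.zero_le L) hP0
  have hksle : ks ≤ L := Nat.findGreatest_le L
  have hkslt : ks < L := by
    rcases eq_or_lt_of_le hksle with h | h
    · exfalso
      obtain ⟨m₀, hm₀⟩ := hPks
      rw [h] at hm₀
      exact (c i).spine_disj m₀ (hm₀ ▸ (c i).bristle_tooth n)
    · exact h
  obtain ⟨m₀, hm₀⟩ := hPks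
  have hmax : ∀ k, k ≤ L → P k → k ≤ ks := fun k hk hPk => Nat.le_findGreatest hk hPk
  -- the bristle piece from `ks` to `L`
  have pne : ascSeg b ks L ≠ [] := ascSeg_ne hksle b
  have pch : (ascSeg b ks L).Chain' G.Adj :=
    ascSeg_chain' (fun k _ hk => ((c i).bristle_path n).2 k hk)
  have pnd : (ascSeg b ks L).Nodup :=
    ascSeg_nodup (((c i).bristle_path n).1.mono Set.Icc_subset_Iic_self)
  have phead : (ascSeg b ks L).head pne = b ks := ascSeg_head hksle b
  have plast : (ascSeg b ks L).getLast pne = toothOf c i n := ascSeg_getLast hksle b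
  obtain ⟨s, sne, shead, slast, sch, snd, smem⟩ := spine_seg (c := c) i a m₀
  have hjunction : s.getLast sne = (ascSeg b ks L).head pne := by
    rw [slast, phead, hm₀]
  have hdisj2 : ∀ v ∈ s, v ∉ (ascSeg b ks L).tail := by
    intro v hv hvt
    obtain ⟨kv, hkv⟩ := smem v hv
    obtain ⟨hvp, hvne⟩ := mem_tail_of_nodup pne pnd hvt
    obtain ⟨k', h1, h2, rfl⟩ := ascSeg_mem hvp
    have : k' ≤ ks := hmax k' h2 ⟨kv, hkv⟩
    have : k' = ks := le_antisymm this h1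
    subst this
    exact hvne (phead ▸ rfl)
  refine ⟨glue s (ascSeg b ks L), glue_ne sne _, ?_, ?_,
    glue_chain' sne pne hjunction sch pch, glue_nodup snd pnd hdisj2, ?_⟩
  · rw [glue_head sne, shead]
  · rw [glue_getLast sne pne hjunction, plast]
  · intro v hv
    rcases mem_glue.1 hv with h | h
    · obtain ⟨k, hk⟩ := smem v h
      exact Or.inl ⟨k, hk⟩
    · obtain ⟨k', _, h2, rfl⟩ := ascSeg_mem (mem_tail_sub h)
      exact Or.inr ⟨k', Set.mem_Iic.2 h2, rfl⟩

end PathLemmas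

end CombStar
open List

namespace CombStar

section PathLemmas2

variable {V : Type*} {G : SimpleGraph V} {U : Set V} {ι : Type} {c : ι → Comb G U}

/-- A path from any interior vertex of comb `i` to its `n`-th tooth, within the comb. -/
theorem comb_path (i : ι) {x : V} (hx : x ∈ (c i).interior) (n : ℕ) :
    ∃ (l : List V) (ne : l ≠ []), l.head ne = x ∧
      l.getLast ne = toothOf c i n ∧ l.Chain' G.Adj ∧ l.Nodup ∧
      ∀ v ∈ l, v ∈ (c i).interior ∨ v = toothOf c i n := by
  classical
  by_cases hxB : ∃ k, k ≤ (c i).len n ∧ (c i).bristle n k = x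
  · obtain ⟨k, hk, rfl⟩ := hxB
    have hklt : k < (c i).len n := by
      rcases eq_or_lt_of_le hk with h | h
      · exact absurd ((c i).bristle_tooth n) (h ▸ interior_not_U hx)
      · exact h
    refine ⟨ascSeg ((c i).bristle n) k ((c i).len n), ascSeg_ne hk _,
      ascSeg_head hk _, ascSeg_getLast hk _,
      ascSeg_chain' (fun k' _ hk' => ((c i).bristle_path n).2 k' hk'),
      ascSeg_nodup (((c i).bristle_path n).1.mono Set.Icc_subset_Iic_self), ?_⟩
    intro v hv
    obtain ⟨k', _, h2, rfl⟩ := ascSeg_mem hv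
    rcases eq_or_lt_of_le h2 with h | h
    · exact Or.inr (by rw [toothOf, h])
    · exact Or.inl (bristle_mem_interior i n h)
  · by_cases hxS : ∃ a, (c i).spine a = x
    · obtain ⟨a, rfl⟩ := hxS
      obtain ⟨l, ne, hh, hl, hc, hn, hm⟩ := comb_path_from_spine (c := c) i a n
      refine ⟨l, ne, hh, hl, hc, hn, ?_⟩
      intro v hv
      rcases hm v hv with ⟨k, rfl⟩ | h
      · exact Or.inl (spine_mem_interior i k)
      · rcases finPathSet_cases h with h | h
        · exact Or.inl h
        · exact Or.inr h
    · rcases interior_cases hx with h | ⟨m, k, hklt, hbx⟩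
      · exact absurd h hxS
      have hmn : m ≠ n := by
        rintro rfl
        exact hxB ⟨k, le_of_lt hklt, hbx⟩
      subst hbx
      set b := (c i).bristle m with hbdef
      set P : ℕ → Prop := fun k' => b k' ∈ Set.range (c i).spine with hP
      set ks : ℕ := Nat.findGreatest P k with hks
      have hP0 : P 0 := (c i).bristle_start m
      have hPks : P ks := Nat.findGreatest_spec (Nat.zero_le k) hP0
      have hksle : ks ≤ k := Nat.findGreatest_le k
      obtain ⟨a₂, ha₂⟩ := hPks
      have hmax : ∀ k', k' ≤ k → P k' → k' ≤ ks := fun k' hk' hPk' =>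
        Nat.le_findGreatest hk' hPk'
      have p1ne' : ascSeg b ks k ≠ [] := ascSeg_ne hksle b
      have p1ne : (ascSeg b ks k).reverse ≠ [] := by simpa using p1ne'
      have p1ch : (ascSeg b ks k).reverse.Chain' G.Adj :=
        chain'_adj_reverse (ascSeg_chain' (fun k' _ hk' =>
          ((c i).bristle_path m).2 k' (lt_trans hk' hklt)))
      have p1nd : (ascSeg b ks k).reverse.Nodup :=
        List.nodup_reverse.2 (ascSeg_nodup (((c i).bristle_path m).1.mono
          (le_trans Set.Icc_subset_Iic_self (Set.Iic_subset_Iic.2 (le_of_lt hklt)))))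
      have p1head : (ascSeg b ks k).reverse.head p1ne = b k := by
        rw [List.head_reverse, ascSeg_getLast hksle]
      have p1last : (ascSeg b ks k).reverse.getLast p1ne = b ks := by
        rw [List.getLast_reverse, ascSeg_head hksle]
      obtain ⟨l₂, ne₂, hh₂, hl₂, hc₂, hn₂, hm₂⟩ := comb_path_from_spine (c := c) i a₂ n
      have hjunction : (ascSeg b ks k).reverse.getLast p1ne = l₂.head ne₂ := by
        rw [p1last, hh₂, ha₂]
      have hdisj2 : ∀ v ∈ (ascSeg b ks k).reverse, v ∉ l₂.tail := by
        intro v hv hvt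
        obtain ⟨k', h1, h2, rfl⟩ := ascSeg_mem (List.mem_reverse.1 hv)
        obtain ⟨hvp, hvne⟩ := mem_tail_of_nodup ne₂ hn₂ hvt
        rcases hm₂ _ hvp with hsp | hfp
        · have : k' ≤ ks := hmax k' h2 hsp
          have : k' = ks := le_antisymm this h1
          subst this
          exact hvne (by rw [hh₂, ← ha₂])
        · have h1' : b k' ∈ finPathSet ((c i).len m) ((c i).bristle m) :=
            mem_finPathSet (le_of_lt (lt_of_le_of_lt h2 hklt))
          exact Set.disjoint_left.1 ((c i).bristle_disj m n hmn) h1' hfp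
      refine ⟨glue (ascSeg b ks k).reverse l₂, glue_ne p1ne _, ?_, ?_,
        glue_chain' p1ne ne₂ hjunction p1ch hc₂,
        glue_nodup p1nd hn₂ hdisj2, ?_⟩
      · rw [glue_head p1ne, p1head]
      · rw [glue_getLast p1ne ne₂ hjunction, hl₂]
      · intro v hv
        rcases mem_glue.1 hv with h | h
        · obtain ⟨k', _, h2, rfl⟩ := ascSeg_mem (List.mem_reverse.1 h)
          exact Or.inl (bristle_mem_interior i m (lt_of_le_of_lt h2 hklt))
        · rcases hm₂ _ (mem_tail_sub h) with ⟨kk, rfl⟩ | hfp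
          · exact Or.inl (spine_mem_interior i kk)
          · rcases finPathSet_cases hfp with h' | h'
            · exact Or.inl h'
            · exact Or.inr h'

/-- From any interior vertex of a comb there is a path inside the interior to the
spine, meeting the spine exactly in its final vertex. -/
theorem to_spine (i : ι) {x : V} (hx : x ∈ (c i).interior) :
    ∃ (l : List V) (ne : l ≠ []) (a₂ : ℕ), l.head ne = x ∧
      l.getLast ne = (c i).spine a₂ ∧ l.Chain' G.Adj ∧ l.Nodup ∧
      (∀ v ∈ l, v ∈ (c i).interior) ∧
      (∀ v ∈ l, ∀ k, (c i).spine k = v → k = a₂) := by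
  classical
  by_cases hxS : ∃ a, (c i).spine a = x
  · obtain ⟨a, rfl⟩ := hxS
    refine ⟨[(c i).spine a], by simp, a, rfl, rfl, List.IsChain.singleton _, by simp, ?_, ?_⟩
    · intro v hv
      rw [List.mem_singleton] at hv
      subst hv
      exact spine_mem_interior i a
    · intro v hv k hk
      rw [List.mem_singleton] at hv
      subst hv
      exact (c i).spine_ray.1 hk
  · rcases interior_cases hx with h | ⟨m, k, hklt, hbx⟩
    · exact absurd h hxS
    subst hbx
    set b := (c i).bristle m with hbdef
    set P : ℕ → Prop := fun k' => b k' ∈ Set.range (c i).spine with hP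
    set ks : ℕ := Nat.findGreatest P k with hks
    have hP0 : P 0 := (c i).bristle_start m
    have hPks : P ks := Nat.findGreatest_spec (Nat.zero_le k) hP0
    have hksle : ks ≤ k := Nat.findGreatest_le k
    obtain ⟨a₂, ha₂⟩ := hPks
    have hmax : ∀ k', k' ≤ k → P k' → k' ≤ ks := fun k' hk' hPk' =>
      Nat.le_findGreatest hk' hPk'
    have p1ne' : ascSeg b ks k ≠ [] := ascSeg_ne hksle b
    have p1ne : (ascSeg b ks k).reverse ≠ [] := by simpa using p1ne'
    refine ⟨(ascSeg b ks k).reverse, p1ne, a₂, ?_, ?_, ?_, ?_, ?_, ?_⟩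
    · rw [List.head_reverse, ascSeg_getLast hksle]
    · rw [List.getLast_reverse, ascSeg_head hksle, ha₂]
    · exact chain'_adj_reverse (ascSeg_chain' (fun k' _ hk' =>
        ((c i).bristle_path m).2 k' (lt_trans hk' hklt)))
    · exact List.nodup_reverse.2 (ascSeg_nodup (((c i).bristle_path m).1.mono
        (le_trans Set.Icc_subset_Iic_self (Set.Iic_subset_Iic.2 (le_of_lt hklt)))))
    · intro v hv
      obtain ⟨k', _, h2, rfl⟩ := ascSeg_mem (List.mem_reverse.1 hv)
      exact bristle_mem_interior i m (lt_of_le_of_lt h2 hklt)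
    · intro v hv kk hkk
      obtain ⟨k', h1, h2, rfl⟩ := ascSeg_mem (List.mem_reverse.1 hv)
      have : k' ≤ ks := hmax k' h2 ⟨kk, hkk⟩
      have : k' = ks := le_antisymm this h1
      subst this
      rw [← ha₂] at hkk
      exact (c i).spine_ray.1 hkk

/-- A path from the `n`-th tooth of comb `i` back to the spine, meeting the
spine exactly in its final vertex. -/
theorem tooth_piece (i : ι) (n : ℕ) :
    ∃ (l : List V) (ne : l ≠ []) (m' : ℕ), l.head ne = toothOf c i n ∧
      l.getLast ne = (c i).spine m' ∧ l.Chain' G.Adj ∧ l.Nodup ∧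
      (∀ v ∈ l, v ∈ (c i).interior ∨ v = toothOf c i n) ∧
      (∀ v ∈ l, ∀ k, (c i).spine k = v → k = m') := by
  classical
  set b := (c i).bristle n with hbdef
  set L := (c i).len n with hLdef
  set P : ℕ → Prop := fun k' => b k' ∈ Set.range (c i).spine with hP
  set ks : ℕ := Nat.findGreatest P L with hks
  have hP0 : P 0 := (c i).bristle_start n
  have hPks : P ks := Nat.findGreatest_spec (Nat.zero_le L) hP0
  have hksle : ks ≤ L := Nat.findGreatest_le L
  have hkslt : ks < L := by
    rcases eq_or_lt_of_le hksle with h | h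
    · exfalso
      obtain ⟨m₀, hm₀⟩ := hPks
      rw [h] at hm₀
      exact (c i).spine_disj m₀ (hm₀ ▸ (c i).bristle_tooth n)
    · exact h
  obtain ⟨m', hm'⟩ := hPks
  have hmax : ∀ k', k' ≤ L → P k' → k' ≤ ks := fun k' hk' hPk' =>
    Nat.le_findGreatest hk' hPk'
  have p1ne' : ascSeg b ks L ≠ [] := ascSeg_ne hksle b
  have p1ne : (ascSeg b ks L).reverse ≠ [] := by simpa using p1ne'
  refine ⟨(ascSeg b ks L).reverse, p1ne, m', ?_, ?_, ?_, ?_, ?_, ?_⟩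
  · rw [List.head_reverse, ascSeg_getLast hksle]
    rfl
  · rw [List.getLast_reverse, ascSeg_head hksle, hm']
  · exact chain'_adj_reverse (ascSeg_chain' (fun k' _ hk' =>
      ((c i).bristle_path n).2 k' hk'))
  · exact List.nodup_reverse.2 (ascSeg_nodup (((c i).bristle_path n).1.mono
      Set.Icc_subset_Iic_self))
  · intro v hv
    obtain ⟨k', _, h2, rfl⟩ := ascSeg_mem (List.mem_reverse.1 hv)
    rcases eq_or_lt_of_le h2 with h | h
    · exact Or.inr (by rw [toothOf, h])
    · exact Or.inl (bristle_mem_interior i n h)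
  · intro v hv kk hkk
    obtain ⟨k', h1, h2, rfl⟩ := ascSeg_mem (List.mem_reverse.1 hv)
    have : k' ≤ ks := hmax k' h2 ⟨kk, hkk⟩
    have : k' = ks := le_antisymm this h1
    subst this
    rw [← hm'] at hkk
    exact (c i).spine_ray.1 hkk

end PathLemmas2

end CombStar
open List

namespace CombStar

section Connect

variable {V : Type*} {G : SimpleGraph V} {U : Set V} {ι : Type} {c : ι → Comb G U}
  {r0 : ℕ → V}

/-- Connector: from the current position on the spine of comb `e`, reach the
interior of a fresh comb `d`, avoiding the used vertices and a finite
exclusion set. -/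
theorem connect (hr0 : IsRay G r0)
    (hdisj : ∀ i j, i ≠ j → Disjoint (c i).interior (c j).interior)
    (hspine : ∀ i, RayEquiv G (c i).spine r0)
    {e d : ι} (hde : d ≠ e) (L : List V) (t : ℕ)
    (inv3 : ∀ k, (c e).spine k ∈ L → k ≤ t)
    (hLd : ∀ v ∈ L, v ∉ (c d).interior)
    (Fex : Set V) (hFfin : Fex.Finite) (hFe : ∀ v ∈ Fex, v ∉ (c e).interior) :
    ∃ (l : List V) (ne : l ≠ []) (x : V), l.head ne = (c e).spine t ∧
      l.getLast ne = x ∧ x ∈ (c d).interior ∧ l.Chain' G.Adj ∧ l.Nodup ∧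
      (∀ v ∈ l.tail, v ∉ L ∧ v ∉ Fex) ∧
      (∀ v ∈ l.dropLast, v ∉ (c d).interior) := by
  classical
  set S₀ : Set V := ({v | v ∈ L} ∪ (c e).spine '' Set.Iic t) ∪ Fex with hS₀
  have hS₀fin : S₀.Finite :=
    (L.finite_toSet.union ((Set.finite_Iic t).image _)).union hFfin
  have hprefin : {k | r0 k ∈ S₀}.Finite := hS₀fin.preimage hr0.1.injOn
  obtain ⟨K, hK⟩ := hprefin.bddAbove
  set S : Set V := S₀ ∪ r0 '' Set.Iic K with hS
  have hSfin : S.Finite := hS₀fin.union ((Set.finite_Iic K).image _)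
  obtain ⟨ie, je, hie, hje, re⟩ := hspine e S hSfin
  obtain ⟨id, jd, hid, hjd, rd⟩ := hspine d S hSfin
  have hjeK : K + 1 ≤ je := by
    by_contra h
    exact hje (Or.inr ⟨je, Set.mem_Iic.2 (by omega), rfl⟩)
  have hjdK : K + 1 ≤ jd := by
    by_contra h
    exact hjd (Or.inr ⟨jd, Set.mem_Iic.2 (by omega), rfl⟩)
  have hr0nS : ∀ k, K + 1 ≤ k → r0 k ∉ S := by
    intro k hk hmem
    rcases hmem with h | ⟨k', hk', hkk'⟩
    · have : k ≤ K := hK h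
      omega
    · have : k' = k := hr0.1 hkk'
      subst this
      exact absurd (Set.mem_Iic.1 hk') (by omega)
  have rmid : (G.induce Sᶜ).Reachable ⟨r0 je, hr0nS je hjeK⟩ ⟨r0 jd, hr0nS jd hjdK⟩ :=
    ray_reachable hr0 hr0nS hjeK hjdK
  have rtot : (G.induce Sᶜ).Reachable ⟨(c e).spine ie, hie⟩ ⟨(c d).spine id, hid⟩ :=
    re.trans (rmid.trans rd.symm)
  obtain ⟨Lw, wne, whead, wlast, wch, wnd, wS⟩ := exists_list_of_reachable rtot
  -- truncate at the last visit to the spine of `e`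
  have hh : Lw.head wne ∈ Set.range (c e).spine := whead ▸ ⟨ie, rfl⟩
  obtain ⟨l', ne', hsuf, hlast', hhead', htail'⟩ := trunc_last Lw wne hh
  -- truncate at the first visit to the interior of `d`
  have hd' : l'.getLast ne' ∈ (c d).interior := by
    rw [hlast', wlast]
    exact spine_mem_interior d id
  obtain ⟨l'', ne'', hpre'', hhead'', hlast'', hdrop''⟩ := trunc_first l' ne' hd'
  have hsubw : ∀ v ∈ l'', v ∈ Lw := fun v hv =>
    hsuf.subset (hpre''.subset hv)
  have hch'' : l''.Chain' G.Adj := (wch.suffix hsuf).prefix hpre''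
  have hnd'' : l''.Nodup := ((wnd.sublist hsuf.sublist).sublist hpre''.sublist)
  obtain ⟨i₂, hi₂⟩ : l''.head ne'' ∈ Set.range (c e).spine := hhead'' ▸ hhead'
  have hi₂S : (c e).spine i₂ ∉ S := by
    rw [hi₂]
    exact wS _ (hsubw _ (List.head_mem ne''))
  have hti₂ : t ≤ i₂ := by
    by_contra h
    exact hi₂S (Or.inl (Or.inl (Or.inr ⟨i₂, Set.mem_Iic.2 (by omega), rfl⟩)))
  have segne : (ascSeg (c e).spine t i₂) ≠ [] := ascSeg_ne hti₂ _
  have segch : (ascSeg (c e).spine t i₂).Chain' G.Adj := ascSeg_chain' (fun k _ _ => (c e).spine_ray.2 k)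
  have segnd : (ascSeg (c e).spine t i₂).Nodup := ascSeg_nodup (c e).spine_ray.1.injOn
  have hjunc : (ascSeg (c e).spine t i₂).getLast segne = l''.head ne'' := by
    rw [ascSeg_getLast hti₂, hi₂]
  have htail'' : ∀ v ∈ l''.tail, v ∉ Set.range (c e).spine := by
    intro v hv
    exact htail' v ((tail_prefix_of_prefix hpre'').subset hv)
  have hdisjseg : ∀ v ∈ (ascSeg (c e).spine t i₂), v ∉ l''.tail := by
    intro v hv hvt
    obtain ⟨k, _, _, rfl⟩ := ascSeg_mem hv
    exact htail'' _ hvt ⟨k, rfl⟩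
  refine ⟨glue (ascSeg (c e).spine t i₂) l'', glue_ne segne _, l''.getLast ne'', ?_, ?_, hlast'', 
    glue_chain' segne ne'' hjunc segch hch'', glue_nodup segnd hnd'' hdisjseg, ?_, ?_⟩
  · rw [glue_head segne, ascSeg_head hti₂]
  · rw [glue_getLast segne ne'' hjunc]
  · -- tail avoids L and Fex
    intro v hv
    have hgnd := glue_nodup segnd hnd'' hdisjseg
    obtain ⟨hvg, hvne⟩ := mem_tail_of_nodup (glue_ne segne _) hgnd hv
    have hvhead : v ≠ (c e).spine t := by
      intro hveq
      apply hvne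
      rw [hveq, glue_head segne, ascSeg_head hti₂]
    rcases mem_glue.1 hvg with h | h
    · obtain ⟨k, h1, _, rfl⟩ := ascSeg_mem h
      have hkt : t < k := by
        rcases eq_or_lt_of_le h1 with h' | h'
        · exact absurd (h' ▸ rfl) hvhead
        · exact h'
      constructor
      · intro hvL
        exact absurd (inv3 k hvL) (by omega)
      · intro hvF
        exact hFe _ hvF (spine_mem_interior e k)
    · have hvS : v ∉ S := wS _ (hsubw _ (mem_tail_sub h))
      exact ⟨fun hvL => hvS (Or.inl (Or.inl (Or.inl hvL))),
        fun hvF => hvS (Or.inl (Or.inr hvF))⟩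
  · -- dropLast avoids the interior of `d`
    intro v hv hvd
    have hgnd := glue_nodup segnd hnd'' hdisjseg
    obtain ⟨hvg, hvne⟩ := mem_dropLast_of_nodup (glue_ne segne _) hgnd hv
    rw [glue_getLast segne ne'' hjunc] at hvne
    rcases mem_glue.1 hvg with h | h
    · obtain ⟨k, _, _, rfl⟩ := ascSeg_mem h
      exact Set.disjoint_left.1 (hdisj e d (Ne.symm hde)) (spine_mem_interior e k) hvd
    · rcases mem_split_getLast ne'' (mem_tail_sub h) with h' | h'
      · exact hdrop'' v h' hvd
      · exact hvne h'

end Connect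

end CombStar
open List

namespace CombStar

theorem getLast_eq_head_of_tail_eq_nil {V : Type*} {l : List V} (ne : l ≠ [])
    (h : l.tail = []) : l.getLast ne = l.head ne := by
  cases l with
  | nil => exact absurd rfl ne
  | cons a t =>
    simp only [List.tail_cons] at h
    subst h
    rfl

/-- The state of the inductive construction of the central ray. -/
structure BState {V : Type*} {G : SimpleGraph V} {U : Set V} {ι : Type}
    (c : ι → Comb G U) where
  l : List V
  e : ι
  t : ℕ
  ne : l ≠ []
  ch : l.Chain' G.Adj
  nd : l.Nodup
  lst : l.getLast ne = (c e).spine t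
  inv3 : ∀ k, (c e).spine k ∈ l → k ≤ t

section Step

variable {V : Type*} {G : SimpleGraph V} {U : Set V} {ι : Type} {c : ι → Comb G U}
  {r0 : ℕ → V}

theorem step_exists (hr0 : IsRay G r0)
    (hdisj : ∀ i j, i ≠ j → Disjoint (c i).interior (c j).interior)
    (hspine : ∀ i, RayEquiv G (c i).spine r0)
    (st : BState c) {u : V} (hu : u ∈ bigU3 c) :
    ∃ st' : BState c, st.l <+: st'.l ∧ st.l.length < st'.l.length ∧ u ∈ st'.l ∧
      ∀ v ∈ st.l, v ∉ (c st'.e).interior := by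
  classical
  obtain ⟨d, ⟨nd0, hnd0⟩, hdL⟩ := select hdisj hu st.l
  have hde : d ≠ st.e := by
    intro h
    apply hdL (st.l.getLast st.ne) (List.getLast_mem st.ne)
    rw [st.lst, h]
    exact spine_mem_interior st.e st.t
  by_cases hul : u ∈ st.l
  · -- `u` is already on the ray; hop to a fresh comb
    obtain ⟨lc, lcne, x, lch, lclast, hxint, lcch, lcnd, lctail, lcdrop⟩ :=
      connect hr0 hdisj hspine hde st.l st.t st.inv3 hdL ∅ Set.finite_empty
        (by simp)
    obtain ⟨lp, lpne, a₂, lph, lpl, lpch, lpnd, lpint, lpuniq⟩ := to_spine d hxint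
    have j1 : st.l.getLast st.ne = lc.head lcne := by rw [st.lst, lch]
    have disj1 : ∀ v ∈ st.l, v ∉ lc.tail := fun v hv hvt => (lctail v hvt).1 hv
    have l1ne : glue st.l lc ≠ [] := glue_ne st.ne lc
    have l1ch : (glue st.l lc).Chain' G.Adj := glue_chain' st.ne lcne j1 st.ch lcch
    have l1nd : (glue st.l lc).Nodup := glue_nodup st.nd lcnd disj1
    have j2 : (glue st.l lc).getLast l1ne = lp.head lpne := by
      rw [glue_getLast st.ne lcne j1, lclast, lph]
    have disj2 : ∀ v ∈ glue st.l lc, v ∉ lp.tail := by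
      intro v hv hvt
      obtain ⟨hvlp, hvne⟩ := mem_tail_of_nodup lpne lpnd hvt
      have hvd : v ∈ (c d).interior := lpint v hvlp
      rcases mem_glue.1 hv with h | h
      · exact hdL v h hvd
      · rcases mem_split_getLast lcne (mem_tail_sub h) with h' | h'
        · exact lcdrop v h' hvd
        · rw [lclast] at h'
          rw [lph] at hvne
          exact hvne h'
    have l2ne : glue (glue st.l lc) lp ≠ [] := glue_ne l1ne lp
    have l2lst : (glue (glue st.l lc) lp).getLast l2ne = (c d).spine a₂ := by
      rw [glue_getLast l1ne lpne j2, lpl]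
    have lctne : lc.tail ≠ [] := by
      intro h
      have hlc1 : lc.getLast lcne = lc.head lcne :=
        getLast_eq_head_of_tail_eq_nil lcne h
      have : x = (c st.e).spine st.t := by rw [← lclast, hlc1, lch]
      apply hde
      exact interior_unique hdisj hxint (this ▸ spine_mem_interior st.e st.t)
    refine ⟨⟨glue (glue st.l lc) lp, d, a₂, l2ne,
      glue_chain' l1ne lpne j2 l1ch lpch, glue_nodup l1nd lpnd disj2, l2lst, ?_⟩,
      ?_, ?_, ?_, hdL⟩
    · -- inv3
      intro k hk
      rcases mem_glue.1 hk with h | h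
      · rcases mem_glue.1 h with h' | h'
        · exact absurd (spine_mem_interior d k) (hdL _ h')
        · rcases mem_split_getLast lcne (mem_tail_sub h') with h'' | h''
          · exact absurd (spine_mem_interior d k) (lcdrop _ h'')
          · rw [lclast] at h''
            have : x ∈ lp := lph ▸ List.head_mem lpne
            exact le_of_eq (lpuniq x this k h'')
      · exact le_of_eq (lpuniq _ (mem_tail_sub h) k rfl)
    · exact (glue_prefix st.l lc).trans (glue_prefix _ lp)
    · show st.l.length < (glue (glue st.l lc) lp).length
      rw [glue_length, glue_length]
      have : 0 < lc.tail.length := List.length_pos_iff.2 lctne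
      omega
    · exact ((glue_prefix st.l lc).trans (glue_prefix _ lp)).subset hul
  · -- main case: route the ray through `u`
    set Fex : Set V := finPathSet ((c d).len nd0) ((c d).bristle nd0) ∪ {u} with hFex
    have hFfin : Fex.Finite :=
      (((Set.finite_Iic _).image _).union (Set.finite_singleton u))
    have hFe : ∀ v ∈ Fex, v ∉ (c st.e).interior := by
      intro v hv hvE
      rcases hv with h | h
      · rcases finPathSet_cases h with h' | h'
        · exact hde (interior_unique hdisj h' hvE)
        · rw [h', hnd0] at hvE
          exact interior_not_U hvE (hnd0 ▸ tooth_mem_U d nd0)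
      · rw [Set.mem_singleton_iff] at h
        subst h
        exact interior_not_U hvE (hnd0 ▸ tooth_mem_U d nd0)
    obtain ⟨lc, lcne, x, lch, lclast, hxint, lcch, lcnd, lctail, lcdrop⟩ :=
      connect hr0 hdisj hspine hde st.l st.t st.inv3 hdL Fex hFfin hFe
    obtain ⟨lp, lpne, lph, lpl, lpch, lpnd, lpmem⟩ := comb_path d hxint nd0
    rw [hnd0] at lpl
    have hlpmem : ∀ v ∈ lp, v ∈ (c d).interior ∨ v = u := by
      intro v hv
      rcases lpmem v hv with h | h
      · exact Or.inl h
      · exact Or.inr (by rw [h, hnd0])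
    have j1 : st.l.getLast st.ne = lc.head lcne := by rw [st.lst, lch]
    have disj1 : ∀ v ∈ st.l, v ∉ lc.tail := fun v hv hvt => (lctail v hvt).1 hv
    have l1ne : glue st.l lc ≠ [] := glue_ne st.ne lc
    have l1ch : (glue st.l lc).Chain' G.Adj := glue_chain' st.ne lcne j1 st.ch lcch
    have l1nd : (glue st.l lc).Nodup := glue_nodup st.nd lcnd disj1
    have j2 : (glue st.l lc).getLast l1ne = lp.head lpne := by
      rw [glue_getLast st.ne lcne j1, lclast, lph]
    have hunotlc : ∀ v ∈ lc, v = u → False := by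
      intro v hv hvu
      rcases (List.mem_cons.1 (by
        rw [List.cons_head_tail lcne]; exact hv :
          v ∈ lc.head lcne :: lc.tail)) with h | h
      · rw [lch] at h
        subst hvu
        exact interior_not_U (h ▸ spine_mem_interior st.e st.t)
          (hnd0 ▸ tooth_mem_U d nd0)
      · subst hvu
        exact (lctail _ h).2 (Or.inr rfl)
    have disj2 : ∀ v ∈ glue st.l lc, v ∉ lp.tail := by
      intro v hv hvt
      obtain ⟨hvlp, hvne⟩ := mem_tail_of_nodup lpne lpnd hvt
      rcases hlpmem v hvlp with hvd | hvu
      · rcases mem_glue.1 hv with h | h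
        · exact hdL v h hvd
        · rcases mem_split_getLast lcne (mem_tail_sub h) with h' | h'
          · exact lcdrop v h' hvd
          · rw [lclast] at h'
            rw [lph] at hvne
            exact hvne h'
      · rcases mem_glue.1 hv with h | h
        · exact hul (hvu ▸ h)
        · exact hunotlc v (mem_tail_sub h) hvu
    have l2ne : glue (glue st.l lc) lp ≠ [] := glue_ne l1ne lp
    have l2ch : (glue (glue st.l lc) lp).Chain' G.Adj :=
      glue_chain' l1ne lpne j2 l1ch lpch
    have l2nd : (glue (glue st.l lc) lp).Nodup := glue_nodup l1nd lpnd disj2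
    have l2lst : (glue (glue st.l lc) lp).getLast l2ne = u := by
      rw [glue_getLast l1ne lpne j2, lpl]
    -- select the fresh comb `d'` to leave `u`
    obtain ⟨d', ⟨nd', hnd'⟩, hd'L⟩ := select hdisj hu (glue (glue st.l lc) lp)
    obtain ⟨rp, rpne, m', rph, rpl, rpch, rpnd, rpmem, rpuniq⟩ := tooth_piece d' nd'
    rw [hnd'] at rph
    have hrpmem : ∀ v ∈ rp, v ∈ (c d').interior ∨ v = u := by
      intro v hv
      rcases rpmem v hv with h | h
      · exact Or.inl h
      · exact Or.inr (by rw [h, hnd'])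
    have j3 : (glue (glue st.l lc) lp).getLast l2ne = rp.head rpne := by
      rw [l2lst, rph]
    have disj3 : ∀ v ∈ glue (glue st.l lc) lp, v ∉ rp.tail := by
      intro v hv hvt
      obtain ⟨hvrp, hvne⟩ := mem_tail_of_nodup rpne rpnd hvt
      rcases hrpmem v hvrp with h | h
      · exact hd'L v hv h
      · rw [rph] at hvne
        exact hvne h
    have l3ne : glue (glue (glue st.l lc) lp) rp ≠ [] := glue_ne l2ne rp
    have l3lst : (glue (glue (glue st.l lc) lp) rp).getLast l3ne = (c d').spine m' := by
      rw [glue_getLast l2ne rpne j3, rpl]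
    have hpre : st.l <+: glue (glue (glue st.l lc) lp) rp :=
      ((glue_prefix st.l lc).trans (glue_prefix _ lp)).trans (glue_prefix _ rp)
    have humem : u ∈ glue (glue (glue st.l lc) lp) rp := by
      apply subset_glue_right l2ne rpne j3
      rw [← rph]
      exact List.head_mem rpne
    refine ⟨⟨glue (glue (glue st.l lc) lp) rp, d', m', l3ne,
      glue_chain' l2ne rpne j3 l2ch rpch, glue_nodup l2nd rpnd disj3, l3lst, ?_⟩,
      hpre, ?_, humem, ?_⟩
    · -- inv3
      intro k hk
      rcases mem_glue.1 hk with h | h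
      · exact absurd (spine_mem_interior d' k) (hd'L _ h)
      · exact le_of_eq (rpuniq _ (mem_tail_sub h) k rfl)
    · -- length increases
      refine lt_of_le_of_ne hpre.length_le ?_
      intro hlen
      rw [hpre.eq_of_length hlen] at hul
      exact hul humem
    · -- freshness
      intro v hv
      exact hd'L v (((glue_prefix st.l lc).trans (glue_prefix _ lp)).subset hv)

end Step

end CombStar

open List CombStar

/-- Comb-to-star lemma: if `U` is countable and `𝒞` is an uncountable family of
pairwise internally disjoint `ε`–`U` combs (spines in the end of `r0`), then
the end of `r0` contains a `|𝒞|`-star of rays whose leaf rays are the spines of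
a subfamily of the combs. -/
theorem combs_to_star {V : Type*} (G : SimpleGraph V) (r0 : ℕ → V)
    (hr0 : IsRay G r0) (U : Set V) (hU : U.Countable)
    {ι : Type} (c : ι → Comb G U) (hunc : ¬ (Set.univ : Set ι).Countable)
    (hspine : ∀ i, RayEquiv G (c i).spine r0)
    (hdisj : ∀ i j, i ≠ j → Disjoint (c i).interior (c j).interior) :
    ∃ (R : ℕ → V) (J : Set ι), Cardinal.mk J = Cardinal.mk ι ∧
      RayEquiv G R r0 ∧
      IsStarOfRays G R (fun j : J => (c j.1).spine) := by
  classical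
  have hι : Nonempty ι := by
    by_contra h
    rw [not_nonempty_iff] at h
    exact hunc Set.countable_univ
  obtain ⟨i₀⟩ := hι
  have hbadA := bad_teeth_countable (c := c) hU
  have hU3ne : (bigU3 c).Nonempty := by
    by_contra h
    have hempty := Set.not_nonempty_iff_eq_empty.1 h
    apply hunc
    refine Set.Countable.mono ?_ hbadA
    intro i _
    exact ⟨0, by simp [hempty]⟩
  have hU3sub : bigU3 c ⊆ U := by
    intro u hu
    obtain ⟨i, ⟨n, hn⟩⟩ := (hu : Set.Infinite _).nonempty
    exact hn ▸ tooth_mem_U i n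
  obtain ⟨enum, henum⟩ := (hU.mono hU3sub).exists_eq_range hU3ne
  have henum' : ∀ n, enum n ∈ bigU3 c := fun n => henum ▸ ⟨n, rfl⟩
  -- initial state
  let st0 : BState c := ⟨[(c i₀).spine 0], i₀, 0, by simp, List.IsChain.singleton _, by simp, rfl,
    by
      intro k hk
      rw [List.mem_singleton] at hk
      exact le_of_eq ((c i₀).spine_ray.1 hk)⟩
  -- the recursively constructed states
  let F : BState c → ℕ → BState c := fun st n =>
    (step_exists hr0 hdisj hspine st (henum' n)).choose
  let stSeq : ℕ → BState c := fun n => Nat.rec st0 (fun k ih => F ih k) n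
  have hspec : ∀ n, (stSeq n).l <+: (stSeq (n + 1)).l ∧
      (stSeq n).l.length < (stSeq (n + 1)).l.length ∧
      enum n ∈ (stSeq (n + 1)).l ∧
      ∀ v ∈ (stSeq n).l, v ∉ (c (stSeq (n + 1)).e).interior :=
    fun n => (step_exists hr0 hdisj hspine (stSeq n) (henum' n)).choose_spec
  have hmono : ∀ m n, m ≤ n → (stSeq m).l <+: (stSeq n).l := by
    intro m n h
    induction n with
    | zero =>
      have : m = 0 := by omega
      subst this
      exact List.prefix_refl _
    | succ k ih =>
      rcases Nat.lt_or_ge m (k + 1) with h' | h'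
      · exact (ih (by omega)).trans (hspec k).1
      · have : m = k + 1 := by omega
        subst this
        exact List.prefix_refl _
  have hlen : ∀ n, n < (stSeq n).l.length := by
    intro n
    induction n with
    | zero => simp [stSeq, st0]
    | succ k ih => exact lt_of_le_of_lt ih (hspec k).2.1
  set v₀ : V := (c i₀).spine 0 with hv₀
  set R : ℕ → V := fun k => (stSeq (k + 1)).l.getD k v₀ with hRdef
  have hR : ∀ n k, k < (stSeq n).l.length → (stSeq n).l.getD k v₀ = R k := by
    intro n k hk
    have hk1 : k < (stSeq (k + 1)).l.length := lt_of_lt_of_le (by omega) (hlen (k + 1)).le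
    show _ = (stSeq (k + 1)).l.getD k v₀
    rw [List.getD_eq_getElem _ _ hk, List.getD_eq_getElem _ _ hk1]
    rcases le_total n (k + 1) with h | h
    · exact (hmono n (k + 1) h).getElem hk
    · exact ((hmono (k + 1) n h).getElem hk1).symm
  have hmemR : ∀ n, ∀ v ∈ (stSeq n).l, v ∈ Set.range R := by
    intro n v hv
    obtain ⟨k, hk, hkv⟩ := List.mem_iff_getElem.1 hv
    exact ⟨k, ((hR n k hk).symm.trans (List.getD_eq_getElem _ _ hk)).trans hkv⟩
  have hRay : IsRay G R := by
    constructor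
    · intro k k' hkk
      rcases lt_trichotomy k k' with h | h | h
      · exfalso
        have hk : k < (stSeq (k' + 1)).l.length :=
          lt_trans (lt_trans h (by omega)) (hlen (k' + 1))
        have hk' : k' < (stSeq (k' + 1)).l.length := lt_trans (by omega) (hlen (k' + 1))
        have e1 : (stSeq (k' + 1)).l[k] = R k :=
          (List.getD_eq_getElem _ v₀ hk).symm.trans (hR (k' + 1) k hk)
        have e2 : (stSeq (k' + 1)).l[k'] = R k' :=
          (List.getD_eq_getElem _ v₀ hk').symm.trans (hR (k' + 1) k' hk')
        have : (stSeq (k' + 1)).l[k] = (stSeq (k' + 1)).l[k'] := by rw [e1, e2, hkk]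
        have := ((stSeq (k' + 1)).nd.getElem_inj_iff).1 this
        omega
      · exact h
      · exfalso
        have hk' : k' < (stSeq (k + 1)).l.length :=
          lt_trans (lt_trans h (by omega)) (hlen (k + 1))
        have hk : k < (stSeq (k + 1)).l.length := lt_trans (by omega) (hlen (k + 1))
        have e1 : (stSeq (k + 1)).l[k] = R k :=
          (List.getD_eq_getElem _ v₀ hk).symm.trans (hR (k + 1) k hk)
        have e2 : (stSeq (k + 1)).l[k'] = R k' :=
          (List.getD_eq_getElem _ v₀ hk').symm.trans (hR (k + 1) k' hk')
        have : (stSeq (k + 1)).l[k] = (stSeq (k + 1)).l[k'] := by rw [e1, e2, hkk]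
        have := ((stSeq (k + 1)).nd.getElem_inj_iff).1 this
        omega
    · intro k
      have hk1 : k + 1 < (stSeq (k + 2)).l.length := lt_of_le_of_lt (by omega) (hlen (k + 2))
      have hk : k < (stSeq (k + 2)).l.length := by omega
      have e1 : (stSeq (k + 2)).l[k] = R k :=
        (List.getD_eq_getElem _ v₀ hk).symm.trans (hR (k + 2) k hk)
      have e2 : (stSeq (k + 2)).l[k + 1] = R (k + 1) :=
        (List.getD_eq_getElem _ v₀ hk1).symm.trans (hR (k + 2) (k + 1) hk1)
      have := List.isChain_iff_getElem.1 (stSeq (k + 2)).ch k (by omega)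
      rwa [e1, e2] at this
  have hU3R : ∀ u ∈ bigU3 c, u ∈ Set.range R := by
    intro u hu
    rw [henum] at hu
    obtain ⟨n, rfl⟩ := hu
    exact hmemR (n + 1) _ (hspec n).2.2.1
  -- the sequence of combs entered is injective
  set eseq : ℕ → ι := fun n => (stSeq n).e with heseq
  have hekey : ∀ m n, m < n → eseq m ≠ eseq n := by
    intro m n hmn heq
    have h1 : (c (eseq m)).spine (stSeq m).t ∈ (stSeq m).l :=
      (stSeq m).lst ▸ List.getLast_mem _
    have h2 : (stSeq m).l ⊆ (stSeq (n - 1)).l := (hmono m (n - 1) (by omega)).subset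
    have h3 := (hspec (n - 1)).2.2.2 _ (h2 h1)
    have hn : n - 1 + 1 = n := by omega
    rw [hn] at h3
    have h4 : (c (eseq m)).spine (stSeq m).t ∈ (c (eseq n)).interior := by
      rw [← heq]
      exact spine_mem_interior _ _
    exact h3 h4
  have heinj : Function.Injective eseq := by
    intro a b hab
    by_contra h
    rcases Nat.lt_or_ge a b with h' | h'
    · exact hekey a b h' hab
    · exact hekey b a (by omega) hab.symm
  -- R lies in the end of r0
  have hRE : RayEquiv G R r0 := by
    intro S hS
    have hbadS := meets_finite hdisj hS
    have hfin2 : (eseq ⁻¹' {i | ∃ v ∈ S, v ∈ (c i).interior}).Finite :=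
      hbadS.preimage heinj.injOn
    obtain ⟨N, hN⟩ := hfin2.bddAbove
    have hnb : eseq (N + 1) ∉ {i | ∃ v ∈ S, v ∈ (c i).interior} := by
      intro hmem
      have : N + 1 ≤ N := hN hmem
      omega
    have hSint : ∀ v ∈ (c (eseq (N + 1))).interior, v ∉ S := fun v hv hvS =>
      hnb ⟨v, hvS, hv⟩
    have hx : (c (eseq (N + 1))).spine (stSeq (N + 1)).t ∈ (stSeq (N + 1)).l :=
      (stSeq (N + 1)).lst ▸ List.getLast_mem _
    obtain ⟨ix, hix⟩ := hmemR (N + 1) _ hx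
    obtain ⟨i1, j1, hi1, hj1, re⟩ := hspine (eseq (N + 1)) S hS
    have hs : ∀ k, 0 ≤ k → (c (eseq (N + 1))).spine k ∉ S := fun k _ =>
      hSint _ (spine_mem_interior _ k)
    have rwalk := ray_reachable (c (eseq (N + 1))).spine_ray hs
      (Nat.zero_le (stSeq (N + 1)).t) (Nat.zero_le i1)
    have hixS : R ix ∈ Sᶜ := by
      rw [hix]
      exact hs _ (Nat.zero_le _)
    refine ⟨ix, j1, hixS, hj1, ?_⟩
    have := rwalk.trans re
    convert this using 2
  -- the index set of leaf combs
  set J : Set ι := {i | (∀ n, toothOf c i n ∈ bigU3 c) ∧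
    ∀ v ∈ Set.range R, v ∉ (c i).interior} with hJdef
  have hJc : Jᶜ.Countable := by
    refine Set.Countable.mono ?_
      (hbadA.union (meets_countable hdisj (Set.countable_range R)))
    intro i hi
    rw [Set.mem_compl_iff, hJdef, Set.mem_setOf_eq, not_and_or] at hi
    rcases hi with h | h
    · push_neg at h
      exact Or.inl h
    · push_neg at h
      obtain ⟨v, hv1, hv2⟩ := h
      exact Or.inr ⟨v, hv1, hv2⟩
  have hcard : Cardinal.mk J = Cardinal.mk ι := by
    have h1 := Cardinal.mk_sum_compl J
    have h2 : Cardinal.mk ↥Jᶜ ≤ Cardinal.aleph0 := by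
      rw [Cardinal.mk_le_aleph0_iff]
      exact hJc.to_subtype
    have huncℵ : Cardinal.aleph0 < Cardinal.mk ι := by
      rw [← not_le, Cardinal.mk_le_aleph0_iff]
      intro hcnt
      exact hunc Set.countable_univ
    have hJinf : Cardinal.aleph0 ≤ Cardinal.mk ↥J := by
      by_contra h
      push_neg at h
      have : Cardinal.mk ι ≤ Cardinal.aleph0 := by
        rw [← h1]
        calc Cardinal.mk ↥J + Cardinal.mk ↥Jᶜ ≤
            Cardinal.aleph0 + Cardinal.aleph0 := add_le_add h.le h2
          _ = Cardinal.aleph0 := Cardinal.aleph0_add_aleph0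
      exact absurd this (not_le.2 huncℵ)
    have h3 : Cardinal.mk ↥J + Cardinal.mk ↥Jᶜ = Cardinal.mk ↥J :=
      Cardinal.add_eq_left hJinf (h2.trans hJinf)
    rw [← h1, h3]
  refine ⟨R, J, hcard, hRE, ?_⟩
  refine ⟨hRay, fun j => (c j.1).spine_ray, ?_, ?_, ?_⟩
  · -- pairwise disjoint leaves
    intro i j hij
    rw [Set.disjoint_left]
    intro x hx1 hx2
    obtain ⟨a, ha⟩ := hx1
    obtain ⟨b, hb⟩ := hx2
    have h1 : x ∈ (c i.1).interior := by
      rw [← ha]; exact spine_mem_interior _ a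
    have h2 : x ∈ (c j.1).interior := by
      rw [← hb]; exact spine_mem_interior _ b
    exact hij (Subtype.ext (interior_unique hdisj h1 h2))
  · -- leaves disjoint from R
    intro j
    rw [Set.disjoint_left]
    intro x hx1 hx2
    obtain ⟨a, ha⟩ := hx1
    refine j.2.2 _ hx2 ?_
    rw [← ha]
    exact spine_mem_interior _ a
  · refine ⟨fun j n => (c j.1).len n, fun j n => (c j.1).bristle n,
      fun j n => (c j.1).bristle_path n, fun j n => (c j.1).bristle_start n,
      fun j n => hU3R _ (j.2.1 n), fun j m n hmn => (c j.1).bristle_disj m n hmn, ?_⟩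
    intro i j hij m n x hx1 hx2
    rcases finPathSet_cases hx1 with h1 | h1
    · rcases finPathSet_cases hx2 with h2 | h2
      · exact absurd (Subtype.ext (interior_unique hdisj h1 h2)) hij
      · exact absurd (tooth_mem_U j.1 n) (h2 ▸ interior_not_U h1)
    · rw [h1]
      exact hU3R _ (i.2.1 m)
end

section
/- In the graph ω₁ # ℕ (the ray inflation of a sparse ω₁-tree-graph, where the tree is the ordinal ω₁ with its linear order), for any sequence of vertices Γ = ⟨(α_n, n) : n ∈ ω⟩ with α_n < α_{n+1} limit ordinals, there exists a comb in ω₁ # ℕ whose teeth are precisely the vertices in Γ: for each n there is a path P_n from (α_n, n) to (α_{n+1}, n+1) contained in the subgraph induced by {(σ, i) : α_n ≤ σ ≤ α_{n+1}, i ∈ ω}, and the union ⋃_n P_n contains a comb with teeth {(α_n, n) : n ∈ ω}. -/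
/-- Vertices of the graph `ω₁ # ℕ`. -/
def Vtx : Type 1 := {o : Ordinal // o < omega1} × ℕ

/-- Adjacency generating `ω₁ # ℕ`, the ray inflation of the sparse tree-graph
on the ordinal `ω₁`: vertical edges `{(α,n),(α,n+1)}`, predecessor edges
`{(γ,n),(γ+1,n)}`, and ladder edges `{(b α n, n),(α,n)}` for limit `α` with
ladder `b α`. -/
def omegaRel (b : Ordinal → ℕ → Ordinal) : Vtx → Vtx → Prop := fun p q =>
  (p.1 = q.1 ∧ q.2 = p.2 + 1) ∨
  (p.2 = q.2 ∧ (q.1 : Ordinal) = (p.1 : Ordinal) + 1) ∨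
  (p.2 = q.2 ∧ Order.IsSuccLimit (q.1 : Ordinal) ∧ (p.1 : Ordinal) = b q.1 p.2)

/-- The graph `ω₁ # ℕ`. -/
def omegaGraph (b : Ordinal → ℕ → Ordinal) : SimpleGraph Vtx :=
  SimpleGraph.fromRel (omegaRel b)

attribute [reducible] Vtx

namespace CombProof

abbrev O1 : Type 1 := {o : Ordinal // o < omega1}

lemma vtx_ne {x y : O1} {i j : ℕ} (h : (x : Ordinal) ≠ y ∨ i ≠ j) :
    ((x, i) : Vtx) ≠ ((y, j) : Vtx) := by
  intro he
  have h1 : x = y := congrArg Prod.fst he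
  have h2 : i = j := congrArg Prod.snd he
  rcases h with h | h
  · exact h (congrArg Subtype.val h1)
  · exact h h2

lemma adj_vert {b : Ordinal → ℕ → Ordinal} (x : O1) {i j : ℕ} (h : j = i + 1 ∨ i = j + 1) :
    (omegaGraph b).Adj (x, i) (x, j) := by
  rw [omegaGraph, SimpleGraph.fromRel_adj]
  refine ⟨vtx_ne (Or.inr (by omega)), ?_⟩
  rcases h with h | h
  · exact Or.inl (Or.inl ⟨rfl, h⟩)
  · exact Or.inr (Or.inl ⟨rfl, h⟩)

lemma ord_lt_add_one (x : Ordinal) : x < x + 1 := by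
  rw [Ordinal.add_one_eq_succ]; exact Order.lt_succ _

lemma adj_succ {b : Ordinal → ℕ → Ordinal} (x y : O1) (i : ℕ)
    (h : (y : Ordinal) = (x : Ordinal) + 1) :
    (omegaGraph b).Adj (x, i) (y, i) := by
  rw [omegaGraph, SimpleGraph.fromRel_adj]
  refine ⟨vtx_ne (Or.inl fun he => ?_), Or.inl (Or.inr (Or.inl ⟨rfl, h⟩))⟩
  exact (ne_of_lt (ord_lt_add_one (x : Ordinal))) (he.trans h)

lemma adj_ladder {b : Ordinal → ℕ → Ordinal} (x y : O1) (i : ℕ)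
    (hy : Order.IsSuccLimit (y : Ordinal)) (hx : (x : Ordinal) = b (y : Ordinal) i)
    (hxy : (x : Ordinal) < (y : Ordinal)) :
    (omegaGraph b).Adj (x, i) (y, i) := by
  rw [omegaGraph, SimpleGraph.fromRel_adj]
  exact ⟨vtx_ne (Or.inl (ne_of_lt hxy)), Or.inl (Or.inr (Or.inr ⟨rfl, hy, hx⟩))⟩

def vf (a c i : ℕ) : ℕ := if a ≤ c then a + i else a - i

def vlist (x : O1) (a c : ℕ) : List Vtx :=
  (List.range (Nat.dist a c + 1)).map (fun i => ((x, vf a c i) : Vtx))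

lemma vlist_ne_nil (x : O1) (a c : ℕ) : vlist x a c ≠ [] := by
  simp [vlist]

lemma length_vlist (x : O1) (a c : ℕ) : (vlist x a c).length = Nat.dist a c + 1 := by
  simp [vlist]

lemma mem_vlist {x : O1} {a c : ℕ} {v : Vtx} :
    v ∈ vlist x a c ↔ v.1 = x ∧ min a c ≤ v.2 ∧ v.2 ≤ max a c := by
  constructor
  · intro hv
    simp only [vlist, List.mem_map, List.mem_range] at hv
    obtain ⟨i, hi, rfl⟩ := hv
    refine ⟨rfl, ?_, ?_⟩ <;> simp only [vf, Nat.dist] at * <;> split <;> omega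
  · rintro ⟨h1, h2, h3⟩
    simp only [vlist, List.mem_map, List.mem_range]
    refine ⟨if a ≤ c then v.2 - a else a - v.2, ?_, ?_⟩
    · simp only [Nat.dist]; split <;> omega
    · have : v = (v.1, v.2) := rfl
      rw [this, h1]
      have : vf a c (if a ≤ c then v.2 - a else a - v.2) = v.2 := by
        simp only [vf]; split <;> omega
      rw [this]

lemma nodup_vlist (x : O1) (a c : ℕ) : (vlist x a c).Nodup := by
  refine List.Nodup.map_on ?_ List.nodup_range
  intro i hi j hj he
  simp only [List.mem_range] at hi hj
  have : vf a c i = vf a c j := congrArg Prod.snd he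
  simp only [vf, Nat.dist] at this hi hj
  split at this <;> omega

lemma chain'_vlist {b : Ordinal → ℕ → Ordinal} (x : O1) (a c : ℕ) :
    List.Chain' (omegaGraph b).Adj (vlist x a c) := by
  unfold List.Chain'; rw [vlist, List.isChain_map]
  rw [show Nat.dist a c + 1 = (Nat.dist a c).succ from rfl, List.isChain_range_succ]
  intro m hm
  refine adj_vert x ?_
  simp only [vf, Nat.dist] at *
  split <;> omega

lemma head?_vlist (x : O1) (a c : ℕ) : (vlist x a c).head? = some (x, a) := by
  rw [vlist, List.range_succ_eq_map]
  simp only [List.map_cons, List.head?_cons]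
  have : vf a c 0 = a := by simp only [vf]; split <;> omega
  rw [this]

lemma getLast?_vlist (x : O1) (a c : ℕ) : (vlist x a c).getLast? = some (x, c) := by
  rw [List.getLast?_eq_getElem?, length_vlist]
  simp only [vlist, List.getElem?_map]
  rw [show Nat.dist a c + 1 - 1 = Nat.dist a c from rfl,
    List.getElem?_range (Nat.lt_succ_self _)]
  have : vf a c (Nat.dist a c) = c := by simp only [vf, Nat.dist]; split <;> omega
  simp [this]

lemma head?_mem_adj {b : Ordinal → ℕ → Ordinal} {l : List Vtx} {w : Vtx}
    (h : ∀ x, l.head? = some x → (omegaGraph b).Adj w x) :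
    ∀ x ∈ (some w : Option Vtx), ∀ y ∈ l.head?, (omegaGraph b).Adj x y := by
  intro x hx y hy
  simp only [Option.mem_def, Option.some.injEq] at hx
  subst hx
  exact h y hy

lemma walk_up (b : Ordinal → ℕ → Ordinal)
    (hlt : ∀ α : Ordinal, α < omega1 → Order.IsSuccLimit α → ∀ n, b α n < α)
    (hconv : ∀ α : Ordinal, α < omega1 → Order.IsSuccLimit α → ∀ γ < α, ∃ n, γ ≤ b α n) :
    ∀ σ : Ordinal, ∀ (hσ : σ < omega1), ∀ γ : Ordinal, ∀ (hγ : γ < σ), ∀ s e : ℕ,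
    ∃ l : List Vtx, l ≠ [] ∧ l.Chain' (omegaGraph b).Adj ∧ l.Nodup ∧
      (∀ x, l.head? = some x → (omegaGraph b).Adj (⟨γ, hγ.trans hσ⟩, e) x) ∧
      l.getLast? = some (⟨σ, hσ⟩, s) ∧
      ∀ v ∈ l, γ < (v.1 : Ordinal) ∧ (v.1 : Ordinal) ≤ σ := by
  intro σ
  induction σ using Ordinal.induction with
  | _ σ IH =>
  intro hσ γ hγ s e
  rcases Ordinal.zero_or_succ_or_isSuccLimit σ with h0 | ⟨τ, hτ⟩ | hL
  · exact absurd (h0 ▸ hγ) (not_lt_of_ge (zero_le (a := γ)))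
  · have hτσ : τ < σ := by rw [← hτ]; exact Order.lt_succ τ
    have hτω : τ < omega1 := hτσ.trans hσ
    have hγτ : γ ≤ τ := by rw [← hτ, Order.lt_succ_iff] at hγ; exact hγ
    have hσsucc : σ = τ + 1 := by rw [← hτ, Ordinal.add_one_eq_succ]
    rcases eq_or_lt_of_le hγτ with rfl | hγτ'
    · refine ⟨vlist ⟨σ, hσ⟩ e s, vlist_ne_nil _ _ _, chain'_vlist _ _ _,
        nodup_vlist _ _ _, ?_, getLast?_vlist _ _ _, ?_⟩
      · intro x hx
        rw [head?_vlist] at hx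
        cases hx
        exact adj_succ _ _ _ hσsucc
      · intro v hv
        have := mem_vlist.mp hv
        rw [this.1]
        exact ⟨hγ, le_refl _⟩
    · obtain ⟨l, hne, hch, hnd, hhd, hlast, hmem⟩ := IH τ hτσ hτω γ hγτ' s e
      refine ⟨l ++ ([(⟨σ, hσ⟩, s)] : List Vtx), by simp, ?_, ?_, ?_, List.getLast?_concat, ?_⟩
      · unfold List.Chain'; rw [List.isChain_append]
        refine ⟨hch, List.isChain_singleton _, ?_⟩
        intro x hx y hy
        rw [hlast] at hx
        simp only [Option.mem_def, Option.some.injEq, List.head?_cons] at hx hy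
        subst hx; subst hy
        exact adj_succ _ _ _ hσsucc
      · rw [List.nodup_append']
        refine ⟨hnd, List.nodup_singleton _, ?_⟩
        intro a ha ha'
        simp only [List.mem_singleton] at ha'
        subst ha'
        exact absurd (hmem _ ha).2 (not_le.mpr hτσ)
      · intro x hx
        rw [List.head?_append, List.head?_eq_head hne] at hx
        have hx' : some (l.head hne) = some x := hx
        injection hx' with hx''
        exact hhd x (by rw [List.head?_eq_head hne, hx''])
      · intro v hv
        rcases List.mem_append.mp hv with hv | hv
        · exact ⟨(hmem v hv).1, (hmem v hv).2.trans hτσ.le⟩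
        · simp only [List.mem_singleton] at hv
          subst hv
          exact ⟨hγ, le_refl _⟩
  · have hγ1 : γ + 1 < σ := by rw [Ordinal.add_one_eq_succ]; exact hL.succ_lt hγ
    obtain ⟨k, hk⟩ := hconv σ hσ hL (γ + 1) hγ1
    have hβσ : b σ k < σ := hlt σ hσ hL k
    have hγβ : γ < b σ k := lt_of_lt_of_le (ord_lt_add_one γ) hk
    obtain ⟨l, hne, hch, hnd, hhd, hlast, hmem⟩ := IH (b σ k) hβσ (hβσ.trans hσ) γ hγβ k e
    refine ⟨l ++ vlist ⟨σ, hσ⟩ k s, by simp [vlist_ne_nil], ?_, ?_, ?_, ?_, ?_⟩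
    · unfold List.Chain'; rw [List.isChain_append]
      refine ⟨hch, chain'_vlist _ _ _, ?_⟩
      intro x hx y hy
      rw [hlast] at hx
      rw [head?_vlist] at hy
      simp only [Option.mem_def, Option.some.injEq] at hx hy
      subst hx; subst hy
      exact adj_ladder _ _ _ hL rfl hβσ
    · rw [List.nodup_append']
      refine ⟨hnd, nodup_vlist _ _ _, ?_⟩
      intro a ha ha'
      have h1 := (hmem _ ha).2
      have h2 := (mem_vlist.mp ha').1
      rw [h2] at h1
      exact absurd (h1.trans_lt hβσ) (lt_irrefl _)
    · intro x hx
      rw [List.head?_append, List.head?_eq_head hne] at hx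
      have hx' : some (l.head hne) = some x := hx
      injection hx' with hx''
      exact hhd x (by rw [List.head?_eq_head hne, hx''])
    · rw [List.getLast?_append, getLast?_vlist]
      rfl
    · intro v hv
      rcases List.mem_append.mp hv with hv | hv
      · exact ⟨(hmem v hv).1, (hmem v hv).2.trans hβσ.le⟩
      · have := mem_vlist.mp hv
        rw [this.1]
        exact ⟨hγ, le_refl _⟩

lemma getD_zero_of_head? {V : Type*} {l : List V} {v d : V} (h : l.head? = some v) :
    l.getD 0 d = v := by
  cases l with
  | nil => simp at h
  | cons a t =>
    simp only [List.head?_cons, Option.some.injEq] at h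
    simp [h]

lemma getD_last_of_getLast? {V : Type*} {l : List V} {v d : V} (h : l.getLast? = some v) :
    l.getD (l.length - 1) d = v := by
  have hne : l ≠ [] := by rintro rfl; simp at h
  have hl : 0 < l.length := List.length_pos_iff.mpr hne
  rw [List.getLast?_eq_getElem?, List.getElem?_eq_getElem (by omega)] at h
  rw [List.getD_eq_getElem l d (by omega)]
  injection h

lemma isFinPath_of_list {V : Type*} (G : SimpleGraph V) (d : V) (l : List V)
    (hne : l ≠ []) (hch : l.Chain' G.Adj) (hnd : l.Nodup) :
    IsFinPath G (l.length - 1) (fun k => l.getD k d) := by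
  have hl : 0 < l.length := List.length_pos_iff.mpr hne
  constructor
  · intro i hi j hj hij
    simp only [Set.mem_Iic] at hi hj
    change l.getD i d = l.getD j d at hij
    rw [List.getD_eq_getElem l d (by omega), List.getD_eq_getElem l d (by omega)] at hij
    have h2 := (List.Nodup.get_inj_iff hnd (i := ⟨i, by omega⟩) (j := ⟨j, by omega⟩)).mp
      (by simpa [List.get_eq_getElem] using hij)
    exact congrArg Fin.val h2
  · intro k hk
    have h2 := List.isChain_iff_getElem.mp hch k (by omega)
    show G.Adj (l.getD k d) (l.getD (k + 1) d)
    rw [List.getD_eq_getElem l d (by omega), List.getD_eq_getElem l d (by omega)]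
    simpa [List.get_eq_getElem] using h2

lemma finPathSet_of_list {V : Type*} (d : V) (l : List V) (hne : l ≠ []) :
    finPathSet (l.length - 1) (fun k => l.getD k d) = {v | v ∈ l} := by
  have hl : 0 < l.length := List.length_pos_iff.mpr hne
  ext v
  simp only [finPathSet, Set.mem_image, Set.mem_Iic, Set.mem_setOf_eq]
  constructor
  · rintro ⟨k, hk, rfl⟩
    rw [List.getD_eq_getElem l d (by omega)]
    exact List.getElem_mem _
  · intro hv
    obtain ⟨n, hn, rfl⟩ := List.mem_iff_getElem.mp hv
    exact ⟨n, by omega, by rw [List.getD_eq_getElem l d hn]⟩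

lemma chain'_getD {V : Type*} {R : V → V → Prop} (d : V) {l : List V}
    (h : List.Chain' R l) {i : ℕ} (hi : i + 1 < l.length) :
    R (l.getD i d) (l.getD (i+1) d) := by
  rw [List.getD_eq_getElem l d (by omega), List.getD_eq_getElem l d hi]
  simpa [List.get_eq_getElem] using List.isChain_iff_getElem.mp h i (by omega)

end CombProof

open CombProof

/-- In `ω₁ # ℕ`, for every sequence of vertices `Γ = ⟨(α n, n)⟩` with `α`
strictly increasing limit ordinals below ω₁, there are paths `P n` from
`(α n, n)` to `(α (n+1), n+1)` inside the box between levels `α n` and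
`α (n+1)`, and the union of these paths contains a comb whose teeth are
precisely the vertices of `Γ`. -/
theorem comb_with_prescribed_teeth (b : Ordinal → ℕ → Ordinal)
    (hmono : ∀ α : Ordinal, α < omega1 → Order.IsSuccLimit α → StrictMono (b α))
    (hlt : ∀ α : Ordinal, α < omega1 → Order.IsSuccLimit α → ∀ n, b α n < α)
    (hconv : ∀ α : Ordinal, α < omega1 → Order.IsSuccLimit α → ∀ γ < α, ∃ n, γ ≤ b α n)
    (α : ℕ → Ordinal) (hα : ∀ n, α n < omega1) (hlim : ∀ n, Order.IsSuccLimit (α n))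
    (hinc : ∀ n, α n < α (n + 1)) :
    ∃ (len : ℕ → ℕ) (P : ℕ → ℕ → Vtx),
      (∀ n, IsFinPath (omegaGraph b) (len n) (P n)) ∧
      (∀ n, P n 0 = (⟨α n, hα n⟩, n)) ∧
      (∀ n, P n (len n) = (⟨α (n + 1), hα (n + 1)⟩, n + 1)) ∧
      (∀ n, ∀ k ≤ len n, α n ≤ ((P n k).1 : Ordinal) ∧ ((P n k).1 : Ordinal) ≤ α (n + 1)) ∧
      ∃ (spine : ℕ → Vtx) (blen : ℕ → ℕ) (br : ℕ → ℕ → Vtx),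
        IsRay (omegaGraph b) spine ∧
        Set.range spine ⊆ ⋃ n, finPathSet (len n) (P n) ∧
        (∀ m, IsFinPath (omegaGraph b) (blen m) (br m)) ∧
        (∀ m, finPathSet (blen m) (br m) ⊆ ⋃ n, finPathSet (len n) (P n)) ∧
        (∀ m, br m 0 ∈ Set.range spine) ∧
        (∀ m, ∃ n, br m (blen m) = (⟨α n, hα n⟩, n)) ∧
        (∀ n, ∃ m, br m (blen m) = (⟨α n, hα n⟩, n)) ∧
        (∀ m, ∀ k < blen m, ∀ n, br m k ≠ (⟨α n, hα n⟩, n)) ∧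
        (∀ n, spine n ∉ {v : Vtx | ∃ m, v = (⟨α m, hα m⟩, m)}) ∧
        (∀ m m', m ≠ m' →
          Disjoint (finPathSet (blen m) (br m)) (finPathSet (blen m') (br m'))) := by
  classical
  have αmono : StrictMono α := strictMono_nat_of_lt_succ hinc
  have αinj : ∀ {m n : ℕ}, α m = α n → m = n := fun h => αmono.injective h
  have hKex : ∀ n, ∃ k, n + 2 ≤ k ∧ α n + 1 ≤ b (α (n+1)) k := by
    intro n
    have h1 : α n + 1 < α (n+1) := by
      rw [Ordinal.add_one_eq_succ]; exact (hlim (n+1)).succ_lt (hinc n)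
    obtain ⟨k₀, hk₀⟩ := hconv (α (n+1)) (hα _) (hlim _) (α n + 1) h1
    exact ⟨max (n+2) k₀, le_max_left _ _,
      hk₀.trans ((hmono (α (n+1)) (hα _) (hlim _)).monotone (le_max_right _ _))⟩
  choose K hK2 hKb using hKex
  let M : ℕ → ℕ := fun n => Nat.rec 2 (fun m _ => K m + 1) n
  have hM0 : M 0 = 2 := rfl
  have hMs : ∀ n, M (n+1) = K n + 1 := fun _ => rfl
  have hM2 : ∀ n, n + 2 ≤ M n := by
    intro n
    cases n with
    | zero => omega
    | succ m => rw [hMs]; have := hK2 m; omega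
  have hβlt : ∀ n, b (α (n+1)) (K n) < α (n+1) := fun n => hlt _ (hα _) (hlim _) _
  have hβgt : ∀ n, α n < b (α (n+1)) (K n) :=
    fun n => lt_of_lt_of_le (ord_lt_add_one _) (hKb n)
  have hβω : ∀ n, b (α (n+1)) (K n) < omega1 := fun n => (hβlt n).trans (hα _)
  have hwalk := fun n =>
    walk_up b hlt hconv (b (α (n+1)) (K n)) (hβω n) (α n) (hβgt n) (K n) (M n)
  choose W hWne hWch hWnd hWhd hWlast hWmem using hwalk
  set d0 : Vtx := (⟨α 0, hα 0⟩, 0) with hd0def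
  let L : ℕ → List Vtx := fun n =>
    vlist ⟨α n, hα n⟩ n (M n) ++ W n ++ vlist ⟨α (n+1), hα (n+1)⟩ (K n) (n+1)
  have hLne : ∀ n, L n ≠ [] := by
    intro n h
    have h' : (vlist (⟨α n, hα n⟩ : O1) n (M n) ++ W n)
        ++ vlist (⟨α (n+1), hα (n+1)⟩ : O1) (K n) (n+1) = [] := h
    rcases List.append_eq_nil_iff.mp h' with ⟨-, h2⟩
    exact vlist_ne_nil _ _ _ h2
  have hLch : ∀ n, (L n).Chain' (omegaGraph b).Adj := by
    intro n
    show ((vlist ⟨α n, hα n⟩ n (M n) ++ W n)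
        ++ vlist ⟨α (n+1), hα (n+1)⟩ (K n) (n+1)).Chain' (omegaGraph b).Adj
    unfold List.Chain'; rw [List.isChain_append, List.isChain_append]
    refine ⟨⟨chain'_vlist _ _ _, hWch n, ?_⟩, chain'_vlist _ _ _, ?_⟩
    · intro x hx y hy
      rw [getLast?_vlist] at hx
      simp only [Option.mem_def, Option.some.injEq] at hx
      subst hx
      exact hWhd n y hy
    · intro x hx y hy
      rw [List.getLast?_append, hWlast n] at hx
      rw [head?_vlist] at hy
      have hx' : some ((⟨b (α (n+1)) (K n), hβω n⟩, K n) : Vtx) = some x := hx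
      injection hx' with hx''
      simp only [Option.mem_def, Option.some.injEq] at hy
      subst hx''; subst hy
      exact adj_ladder _ _ _ (hlim (n+1)) rfl (hβlt n)
  have hLnd : ∀ n, (L n).Nodup := by
    intro n
    show ((vlist ⟨α n, hα n⟩ n (M n) ++ W n)
        ++ vlist ⟨α (n+1), hα (n+1)⟩ (K n) (n+1)).Nodup
    rw [List.nodup_append', List.nodup_append']
    refine ⟨⟨nodup_vlist _ _ _, hWnd n, ?_⟩, nodup_vlist _ _ _, ?_⟩
    · intro a ha ha'
      have h1 : (a.1 : Ordinal) = α n := congrArg Subtype.val (mem_vlist.mp ha).1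
      have h2 := (hWmem n a ha').1
      rw [h1] at h2
      exact lt_irrefl _ h2
    · intro a ha ha'
      have h2 : (a.1 : Ordinal) = α (n+1) := congrArg Subtype.val (mem_vlist.mp ha').1
      rcases List.mem_append.mp ha with ha | ha
      · have h1 : (a.1 : Ordinal) = α n := congrArg Subtype.val (mem_vlist.mp ha).1
        rw [h1] at h2
        exact absurd h2 (ne_of_lt (hinc n))
      · have h1 := (hWmem n a ha).2
        rw [h2] at h1
        exact absurd (h1.trans_lt (hβlt n)) (lt_irrefl _)
  have hLhd : ∀ n, (L n).head? = some ((⟨α n, hα n⟩, n) : Vtx) := by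
    intro n
    show ((vlist ⟨α n, hα n⟩ n (M n) ++ W n)
        ++ vlist ⟨α (n+1), hα (n+1)⟩ (K n) (n+1)).head? = _
    rw [List.head?_append, List.head?_append, head?_vlist]
    rfl
  have hLlast : ∀ n, (L n).getLast? = some ((⟨α (n+1), hα (n+1)⟩, n+1) : Vtx) := by
    intro n
    show ((vlist ⟨α n, hα n⟩ n (M n) ++ W n)
        ++ vlist ⟨α (n+1), hα (n+1)⟩ (K n) (n+1)).getLast? = _
    rw [List.getLast?_append, getLast?_vlist]
    rfl
  have hLmem : ∀ n, ∀ v ∈ L n, α n ≤ (v.1 : Ordinal) ∧ (v.1 : Ordinal) ≤ α (n+1) := by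
    intro n v hv
    have hv' : v ∈ (vlist (⟨α n, hα n⟩ : O1) n (M n) ++ W n)
        ++ vlist (⟨α (n+1), hα (n+1)⟩ : O1) (K n) (n+1) := hv
    rcases List.mem_append.mp hv' with hv1 | hv1
    · rcases List.mem_append.mp hv1 with hv2 | hv2
      · have h1 : (v.1 : Ordinal) = α n := congrArg Subtype.val (mem_vlist.mp hv2).1
        rw [h1]
        exact ⟨le_refl _, (hinc n).le⟩
      · have := hWmem n v hv2
        exact ⟨this.1.le, this.2.trans (hβlt n).le⟩
    · have h1 : (v.1 : Ordinal) = α (n+1) := congrArg Subtype.val (mem_vlist.mp hv1).1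
      rw [h1]
      exact ⟨(hinc n).le, le_refl _⟩
  have hLv1 : ∀ n j, n ≤ j → j ≤ M n → ((⟨α n, hα n⟩, j) : Vtx) ∈ L n := by
    intro n j h1 h2
    show _ ∈ (vlist ⟨α n, hα n⟩ n (M n) ++ W n) ++ vlist ⟨α (n+1), hα (n+1)⟩ (K n) (n+1)
    refine List.mem_append.mpr (Or.inl (List.mem_append.mpr (Or.inl (mem_vlist.mpr ?_))))
    exact ⟨rfl, by omega, by omega⟩
  have hLv2 : ∀ n j, n + 1 ≤ j → j ≤ K n → ((⟨α (n+1), hα (n+1)⟩, j) : Vtx) ∈ L n := by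
    intro n j h1 h2
    show _ ∈ (vlist ⟨α n, hα n⟩ n (M n) ++ W n) ++ vlist ⟨α (n+1), hα (n+1)⟩ (K n) (n+1)
    exact List.mem_append.mpr (Or.inr (mem_vlist.mpr ⟨rfl, by omega, by omega⟩))
  have hLW : ∀ n, ∀ v ∈ W n, v ∈ L n := by
    intro n v hv
    show v ∈ (vlist ⟨α n, hα n⟩ n (M n) ++ W n) ++ vlist ⟨α (n+1), hα (n+1)⟩ (K n) (n+1)
    exact List.mem_append.mpr (Or.inl (List.mem_append.mpr (Or.inr hv)))
  let len : ℕ → ℕ := fun n => (L n).length - 1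
  let P : ℕ → ℕ → Vtx := fun n k => (L n).getD k d0
  have hfps : ∀ n, finPathSet (len n) (P n) = {v | v ∈ L n} :=
    fun n => finPathSet_of_list d0 (L n) (hLne n)
  let Seg : ℕ → List Vtx := fun n =>
    (if n = 0 then ([(⟨α 0, hα 0⟩, 2)] : List Vtx) else []) ++ W n ++
      ([(⟨α (n+1), hα (n+1)⟩, K n), (⟨α (n+1), hα (n+1)⟩, K n + 1)] : List Vtx)
  have hSegne : ∀ n, Seg n ≠ [] := by
    intro n h
    have h' : ((if n = 0 then ([(⟨α 0, hα 0⟩, 2)] : List Vtx) else []) ++ W n)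
        ++ ([(⟨α (n+1), hα (n+1)⟩, K n), (⟨α (n+1), hα (n+1)⟩, K n + 1)] : List Vtx) = [] := h
    rcases List.append_eq_nil_iff.mp h' with ⟨-, h2⟩
    exact List.cons_ne_nil _ _ h2
  have hSegA : ∀ n, Seg (n+1) = W (n+1) ++
      ([(⟨α (n+2), hα (n+2)⟩, K (n+1)), (⟨α (n+2), hα (n+2)⟩, K (n+1) + 1)] : List Vtx) := by
    intro n
    show (if n + 1 = 0 then _ else []) ++ _ ++ _ = _
    rw [if_neg (Nat.succ_ne_zero n), List.nil_append]
  have hSeg0 : Seg 0 = ([(⟨α 0, hα 0⟩, 2)] : List Vtx) ++ W 0 ++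
      ([(⟨α 1, hα 1⟩, K 0), (⟨α 1, hα 1⟩, K 0 + 1)] : List Vtx) := by
    show (if 0 = 0 then _ else []) ++ _ ++ _ = _
    rw [if_pos rfl]
  have hSegch : ∀ n, (Seg n).Chain' (omegaGraph b).Adj := by
    intro n
    show ((if n = 0 then ([(⟨α 0, hα 0⟩, 2)] : List Vtx) else []) ++ W n ++
      ([(⟨α (n+1), hα (n+1)⟩, K n), (⟨α (n+1), hα (n+1)⟩, K n + 1)] : List Vtx)).Chain' _
    unfold List.Chain'; rw [List.isChain_append, List.isChain_append]
    refine ⟨⟨?_, hWch n, ?_⟩, ?_, ?_⟩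
    · split <;> simp
    · intro x hx y hy
      split at hx
      · next hn =>
        subst hn
        simp only [List.getLast?_singleton, Option.mem_def, Option.some.injEq] at hx
        subst hx
        exact hWhd 0 y hy
      · simp at hx
    · refine List.isChain_cons_cons.mpr ⟨?_, List.isChain_singleton _⟩
      exact adj_vert _ (Or.inl rfl)
    · intro x hx y hy
      rw [List.getLast?_append, hWlast n] at hx
      have hx' : some ((⟨b (α (n+1)) (K n), hβω n⟩, K n) : Vtx) = some x := hx
      injection hx' with hx''
      simp only [List.head?_cons, Option.mem_def, Option.some.injEq] at hy
      subst hx''; subst hy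
      exact adj_ladder _ _ _ (hlim (n+1)) rfl (hβlt n)
  have hSegnd : ∀ n, (Seg n).Nodup := by
    intro n
    show ((if n = 0 then ([(⟨α 0, hα 0⟩, 2)] : List Vtx) else []) ++ W n ++
      ([(⟨α (n+1), hα (n+1)⟩, K n), (⟨α (n+1), hα (n+1)⟩, K n + 1)] : List Vtx)).Nodup
    rw [List.nodup_append', List.nodup_append']
    refine ⟨⟨?_, hWnd n, ?_⟩, ?_, ?_⟩
    · split <;> simp
    · intro a ha ha'
      split at ha
      · next hn =>
        subst hn
        simp only [List.mem_singleton] at ha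
        subst ha
        have h2 := (hWmem 0 _ ha').1
        exact lt_irrefl _ h2
      · simp at ha
    · refine List.nodup_cons.mpr ⟨?_, List.nodup_singleton _⟩
      intro hmem
      simp only [List.mem_singleton] at hmem
      have := congrArg Prod.snd hmem
      omega
    · intro a ha ha'
      have h2 : (a.1 : Ordinal) = α (n+1) := by
        rcases List.mem_cons.mp ha' with h | h
        · rw [h]
        · simp only [List.mem_singleton] at h; rw [h]
      rcases List.mem_append.mp ha with ha1 | ha1
      · split at ha1
        · next hn =>
          subst hn
          simp only [List.mem_singleton] at ha1
          subst ha1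
          have : (α 0 : Ordinal) < α 1 := hinc 0
          rw [show ((((⟨α 0, hα 0⟩, 2) : Vtx)).1 : Ordinal) = α 0 from rfl] at h2
          rw [h2] at this
          exact lt_irrefl _ this
        · simp at ha1
      · have h1 := (hWmem n a ha1).2
        rw [h2] at h1
        exact absurd (h1.trans_lt (hβlt n)) (lt_irrefl _)
  have hSeglast : ∀ n, (Seg n).getLast? = some ((⟨α (n+1), hα (n+1)⟩, K n + 1) : Vtx) := by
    intro n
    show ((if n = 0 then ([(⟨α 0, hα 0⟩, 2)] : List Vtx) else []) ++ W n ++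
      ([(⟨α (n+1), hα (n+1)⟩, K n), (⟨α (n+1), hα (n+1)⟩, K n + 1)] : List Vtx)).getLast? = _
    rw [List.getLast?_append]
    rfl
  have hSeghd : ∀ n x, (Seg (n+1)).head? = some x → (W (n+1)).head? = some x := by
    intro n x hx
    rw [hSegA n, List.head?_append, List.head?_eq_head (hWne (n+1))] at hx
    have hx' : some ((W (n+1)).head (hWne (n+1))) = some x := hx
    injection hx' with hx''
    rw [List.head?_eq_head (hWne (n+1)), hx'']
  have hSegP : ∀ n, ∀ v ∈ Seg n, (v ∈ L n ∨ v ∈ L (n+1)) ∧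
      α n ≤ (v.1 : Ordinal) ∧ (v.1 : Ordinal) ≤ α (n+1) ∧
      (∀ m, v ≠ ((⟨α m, hα m⟩, m) : Vtx)) ∧ (1 ≤ n → α n < (v.1 : Ordinal)) := by
    intro n v hv
    have hv' : v ∈ ((if n = 0 then ([(⟨α 0, hα 0⟩, 2)] : List Vtx) else []) ++ W n)
        ++ ([(⟨α (n+1), hα (n+1)⟩, K n), (⟨α (n+1), hα (n+1)⟩, K n + 1)] : List Vtx) := hv
    rcases List.mem_append.mp hv' with hv1 | hv1
    · rcases List.mem_append.mp hv1 with hv2 | hv2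
      · split at hv2
        · next hn =>
          subst hn
          simp only [List.mem_singleton] at hv2
          subst hv2
          refine ⟨Or.inl (hLv1 0 2 (by omega) (by omega)), le_refl _, (hinc 0).le, ?_, by omega⟩
          intro m hm
          have h1 : α 0 = α m := congrArg (fun w : Vtx => (w.1 : Ordinal)) hm
          have h2 : 2 = m := congrArg Prod.snd hm
          have := αinj h1
          omega
        · simp at hv2
      · have hb := hWmem n v hv2
        have hub : (v.1 : Ordinal) < α (n+1) := hb.2.trans_lt (hβlt n)
        refine ⟨Or.inl (hLW n v hv2), hb.1.le, hub.le, ?_, fun _ => hb.1⟩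
        intro m hm
        have h1 : (v.1 : Ordinal) = α m := congrArg (fun w : Vtx => (w.1 : Ordinal)) hm
        rcases le_or_gt m n with h | h
        · have : α m ≤ α n := αmono.monotone h
          rw [h1] at hb
          exact absurd hb.1 (not_lt.mpr this)
        · have : α (n+1) ≤ α m := αmono.monotone h
          rw [h1] at hub
          exact absurd hub (not_lt.mpr this)
    · have hc : v = ((⟨α (n+1), hα (n+1)⟩, K n) : Vtx) ∨
          v = ((⟨α (n+1), hα (n+1)⟩, K n + 1) : Vtx) := by
        rcases List.mem_cons.mp hv1 with h | h
        · exact Or.inl h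
        · simp only [List.mem_singleton] at h; exact Or.inr h
      have hKn := hK2 n
      have hteeth : ∀ j, (v = ((⟨α (n+1), hα (n+1)⟩, j) : Vtx)) → n + 2 ≤ j →
          ∀ m, v ≠ ((⟨α m, hα m⟩, m) : Vtx) := by
        intro j hj hj2 m hm
        rw [hj] at hm
        have h1 : α (n+1) = α m := congrArg (fun w : Vtx => (w.1 : Ordinal)) hm
        have h2 : j = m := congrArg Prod.snd hm
        have := αinj h1
        omega
      rcases hc with hc | hc
      · subst hc
        exact ⟨Or.inl (hLv2 n (K n) (by omega) (le_refl _)), (hinc n).le, le_refl _,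
          hteeth (K n) rfl (by omega), fun _ => hinc n⟩
      · subst hc
        refine ⟨Or.inr (hLv1 (n+1) (K n + 1) (by omega) (by rw [hMs])),
          (hinc n).le, le_refl _, hteeth (K n + 1) rfl (by omega), fun _ => hinc n⟩
  have hbase : ∀ m, ∃ n, ((⟨α m, hα m⟩, M m) : Vtx) ∈ Seg n := by
    intro m
    cases m with
    | zero =>
      refine ⟨0, ?_⟩
      rw [hSeg0]
      exact List.mem_append.mpr (Or.inl (List.mem_append.mpr (Or.inl (List.mem_singleton.mpr rfl))))
    | succ j =>
      refine ⟨j, ?_⟩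
      have : ((⟨α (j+1), hα (j+1)⟩, M (j+1)) : Vtx) = (⟨α (j+1), hα (j+1)⟩, K j + 1) := by
        rw [hMs]
      rw [this]
      show _ ∈ ((if j = 0 then _ else []) ++ W j) ++ _
      refine List.mem_append.mpr (Or.inr ?_)
      simp
  let c : ℕ → ℕ := fun n => ∑ i ∈ Finset.range n, (Seg i).length
  have hc0 : c 0 = 0 := Finset.sum_range_zero _
  have hcs : ∀ n, c (n+1) = c n + (Seg n).length := fun n => Finset.sum_range_succ _ n
  have hSeglen : ∀ n, 0 < (Seg n).length := fun n => List.length_pos_iff.mpr (hSegne n)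
  have hcmono : Monotone c := monotone_nat_of_le_succ (fun n => by rw [hcs]; omega)
  have hclt : ∀ n, c n < c (n+1) := fun n => by rw [hcs]; have := hSeglen n; omega
  have hcn : ∀ n, n ≤ c n := by
    intro n
    induction n with
    | zero => omega
    | succ m ih => have := hclt m; omega
  have hex : ∀ k : ℕ, ∃ n, k < c (n+1) :=
    fun k => ⟨k, lt_of_lt_of_le (Nat.lt_succ_self k) (hcn (k+1))⟩
  let ns : ℕ → ℕ := fun k => Nat.find (hex k)
  have hns1 : ∀ k, k < c (ns k + 1) := fun k => Nat.find_spec (hex k)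
  have hns2 : ∀ k, c (ns k) ≤ k := by
    intro k
    by_contra h
    push_neg at h
    cases hz : ns k with
    | zero => rw [hz, hc0] at h; omega
    | succ m =>
      have hmin := Nat.find_min (hex k) (show m < ns k by omega)
      rw [hz] at h
      exact hmin h
  have hoff : ∀ k, k - c (ns k) < (Seg (ns k)).length := by
    intro k
    have h1 := hns1 k
    have h2 := hns2 k
    have h3 := hcs (ns k)
    omega
  have hns_eq : ∀ k n, c n ≤ k → k < c (n+1) → ns k = n := by
    intro k n h1 h2
    rcases lt_trichotomy (ns k) n with h | h | h
    · have := hns1 k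
      have := hcmono (show ns k + 1 ≤ n by omega)
      omega
    · exact h
    · have := hcmono (show n + 1 ≤ ns k by omega)
      have := hns2 k
      omega
  let spine : ℕ → Vtx := fun k => (Seg (ns k)).getD (k - c (ns k)) d0
  have hspine_mem : ∀ k, spine k ∈ Seg (ns k) := by
    intro k
    show (Seg (ns k)).getD (k - c (ns k)) d0 ∈ _
    rw [List.getD_eq_getElem _ _ (hoff k)]
    exact List.getElem_mem _
  have hspine_surj : ∀ n, ∀ v ∈ Seg n, ∃ k, spine k = v := by
    intro n v hv
    obtain ⟨i, hi, hvi⟩ := List.mem_iff_getElem.mp hv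
    refine ⟨c n + i, ?_⟩
    have hn : ns (c n + i) = n := hns_eq _ _ (by omega) (by rw [hcs]; omega)
    show (Seg (ns (c n + i))).getD (c n + i - c (ns (c n + i))) d0 = v
    rw [hn, show c n + i - c n = i by omega, List.getD_eq_getElem _ _ hi, hvi]
  have hinj_aux : ∀ k k', ns k < ns k' → spine k ≠ spine k' := by
    intro k k' h hsp
    have h1 := (hSegP _ _ (hspine_mem k)).2.2.1
    have h2 := (hSegP _ _ (hspine_mem k')).2.2.2.2 (by omega)
    have h3 : α (ns k + 1) ≤ α (ns k') := αmono.monotone (by omega)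
    rw [hsp] at h1
    exact absurd h2 (not_lt.mpr (h1.trans h3))
  have hspine_inj : Function.Injective spine := by
    intro k k' hkk
    rcases lt_trichotomy (ns k) (ns k') with h | h | h
    · exact absurd hkk (hinj_aux k k' h)
    · have e1 : spine k = (Seg (ns k)).getD (k - c (ns k)) d0 := rfl
      have e2 : spine k' = (Seg (ns k')).getD (k' - c (ns k')) d0 := rfl
      rw [← h] at e2
      have o2 : k' - c (ns k) < (Seg (ns k)).length := by
        have := hoff k'
        rw [← h] at this
        exact this
      have hg : (Seg (ns k)).get ⟨k - c (ns k), hoff k⟩ = (Seg (ns k)).get ⟨k' - c (ns k), o2⟩ := by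
        simp only [List.get_eq_getElem]
        rw [← List.getD_eq_getElem _ d0, ← List.getD_eq_getElem _ d0, ← e1, ← e2]
        exact hkk
      have := congrArg Fin.val (((hSegnd (ns k)).get_inj_iff).mp hg)
      simp only at this
      have hk1 := hns2 k
      have hk2 := hns2 k'
      have : c (ns k') = c (ns k) := by rw [h]
      omega
    · exact absurd hkk.symm (hinj_aux k' k h)
  have hMsK : ∀ n, (M (n+1) : ℕ) = K n + 1 := hMs
  have hspine_adj : ∀ k, (omegaGraph b).Adj (spine k) (spine (k+1)) := by
    intro k
    by_cases hc : k + 1 < c (ns k + 1)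
    · have e : ns (k+1) = ns k := hns_eq _ _ (by have := hns2 k; omega) hc
      have e1 : spine k = (Seg (ns k)).getD (k - c (ns k)) d0 := rfl
      have e2 : spine (k+1) = (Seg (ns k)).getD (k + 1 - c (ns k)) d0 := by
        show (Seg (ns (k+1))).getD (k + 1 - c (ns (k+1))) d0 = _
        rw [e]
      have hlt2 : k + 1 - c (ns k) < (Seg (ns k)).length := by
        have := hoff (k+1)
        rw [e] at this
        exact this
      have harith : k + 1 - c (ns k) = (k - c (ns k)) + 1 := by have := hns2 k; omega
      rw [e1, e2, harith]
      exact chain'_getD d0 (hSegch (ns k)) (by omega)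
    · have hceq : k + 1 = c (ns k + 1) := by have := hns1 k; omega
      have e : ns (k+1) = ns k + 1 := by
        refine hns_eq _ _ (by omega) ?_
        rw [hceq]
        exact hclt _
      have e1 : spine k = ((⟨α (ns k + 1), hα _⟩, K (ns k) + 1) : Vtx) := by
        show (Seg (ns k)).getD (k - c (ns k)) d0 = _
        have harith : k - c (ns k) = (Seg (ns k)).length - 1 := by
          have := hns2 k
          have := hcs (ns k)
          have := hSeglen (ns k)
          omega
        rw [harith]
        exact getD_last_of_getLast? (hSeglast (ns k))
      obtain ⟨x, hx⟩ : ∃ x, (Seg (ns k + 1)).head? = some x :=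
        ⟨_, List.head?_eq_head (hSegne _)⟩
      have e2 : spine (k+1) = x := by
        show (Seg (ns (k+1))).getD (k + 1 - c (ns (k+1))) d0 = _
        rw [e, show k + 1 - c (ns k + 1) = 0 by omega]
        exact getD_zero_of_head? hx
      rw [e1, e2]
      have hW : (W (ns k + 1)).head? = some x := hSeghd (ns k) x hx
      have hadj := hWhd (ns k + 1) x hW
      rw [hMsK] at hadj
      exact hadj
  have hlenpos : ∀ n, 0 < (L n).length := fun n => List.length_pos_iff.mpr (hLne n)
  refine ⟨len, P, ?_, ?_, ?_, ?_, spine, fun m => M m - m,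
    fun m k => (⟨α m, hα m⟩, M m - k), ⟨hspine_inj, hspine_adj⟩, ?_, ?_, ?_, ?_, ?_, ?_, ?_, ?_, ?_⟩
  · exact fun n => isFinPath_of_list (omegaGraph b) d0 (L n) (hLne n) (hLch n) (hLnd n)
  · exact fun n => getD_zero_of_head? (hLhd n)
  · exact fun n => getD_last_of_getLast? (hLlast n)
  · intro n k hk
    have hkl : k < (L n).length := by
      have := hlenpos n
      have hlen : len n = (L n).length - 1 := rfl
      omega
    have hmem : P n k ∈ L n := by
      show (L n).getD k d0 ∈ L n
      rw [List.getD_eq_getElem _ _ hkl]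
      exact List.getElem_mem _
    exact hLmem n _ hmem
  · rintro v ⟨k, rfl⟩
    have hm := (hSegP _ _ (hspine_mem k)).1
    rcases hm with hm | hm
    · exact Set.mem_iUnion.mpr ⟨ns k, by rw [hfps]; exact hm⟩
    · exact Set.mem_iUnion.mpr ⟨ns k + 1, by rw [hfps]; exact hm⟩
  · intro m
    constructor
    · intro i hi j hj hij
      simp only [Set.mem_Iic] at hi hj
      have hi' : i ≤ M m - m := hi
      have hj' : j ≤ M m - m := hj
      have h2 : M m - i = M m - j := congrArg Prod.snd hij
      have := hM2 m
      omega
    · intro k hk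
      have hk' : k < M m - m := hk
      refine adj_vert _ (Or.inr ?_)
      omega
  · intro m v hv
    obtain ⟨k, hk, rfl⟩ := hv
    simp only [Set.mem_Iic] at hk
    have hk2 : k ≤ M m - m := hk
    refine Set.mem_iUnion.mpr ⟨m, ?_⟩
    rw [hfps]
    exact hLv1 m (M m - k) (by have := hM2 m; omega) (by omega)
  · intro m
    obtain ⟨n, hn⟩ := hbase m
    obtain ⟨k, hk⟩ := hspine_surj n _ hn
    refine ⟨k, ?_⟩
    rw [hk]
    show ((⟨α m, hα m⟩, M m) : Vtx) = (⟨α m, hα m⟩, M m - 0)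
    rw [Nat.sub_zero]
  · intro m
    refine ⟨m, ?_⟩
    show ((⟨α m, hα m⟩, M m - (M m - m)) : Vtx) = _
    rw [Nat.sub_sub_self (by have := hM2 m; omega)]
  · intro n
    refine ⟨n, ?_⟩
    show ((⟨α n, hα n⟩, M n - (M n - n)) : Vtx) = _
    rw [Nat.sub_sub_self (by have := hM2 n; omega)]
  · intro m k hk n he
    have hk' : k < M m - m := hk
    have h1 : α m = α n := congrArg (fun w : Vtx => (w.1 : Ordinal)) he
    have h2 : M m - k = n := congrArg Prod.snd he
    have := αinj h1
    have := hM2 m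
    omega
  · rintro n ⟨m, hm⟩
    exact (hSegP _ _ (hspine_mem n)).2.2.2.1 m hm
  · intro m m' hmm
    rw [Set.disjoint_left]
    rintro v ⟨k, hk, rfl⟩ ⟨k', hk', hv'⟩
    have h1 : α m' = α m := congrArg (fun w : Vtx => (w.1 : Ordinal)) hv'
    exact hmm (αinj h1).symm
end
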